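/- arXiv:1209.3296 — 4 statements merged into one kernel-verified Lean document; each statement's English description precedes it below -/
import Mathlib

section
/- Assume c is an integer with c > h(R₀) := ⟨ρ,ϑ∨⟩ + 1, where ρ is the half-sum of the positive roots of R₀ (so that W preserves P and each T̂_a restricts to an operator on functions P → ℂ). For each w ∈ W fix a reduced expression w = u∘s_{a_{j₁}}∘⋯∘s_{a_{jℓ}} with u ∈ Ω and ℓ = ℓ(w), and set T̂_w := u∘T̂_{j₁}∘⋯∘T̂_{jℓ} acting on functions P → ℂ. Then the family {T̂_w : w ∈ W} is linearly independent: for every finite S ⊆ W and complex coefficients (a_w)_{w∈S}, if ∑_{w∈S} a_w T̂_w annihilates every function P → ℂ, then a_w = 0 for all w ∈ S. In other words, the difference-reflection representation of the extended affine Hecke algebra on functions over the weight lattice is faithful. -/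
open scoped RealInnerProductSpace BigOperators Classical

noncomputable section

/-- Alternating composition `A ∘ B ∘ A ∘ ⋯` with `m` factors (starting with `A`). -/
def altComp {α : Type*} (A B : α → α) : ℕ → (α → α)
  | 0 => id
  | m + 1 => A ∘ altComp B A m

/-- The sign of a real number, as an integer (with `sgnZ 0 = 0`). -/
def sgnZ (x : ℝ) : ℤ := if 0 < x then 1 else if x < 0 then -1 else 0

/-- The function `v(x) = (1-t²)∫₀ˣ dy/(1-2t cos y+t²)`. -/
def mvfun (t x : ℝ) : ℝ :=
  (1 - t ^ 2) * ∫ y in (0:ℝ)..x, 1 / (1 - 2 * t * Real.cos y + t ^ 2)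

section AffineOps

variable {V : Type*} [NormedAddCommGroup V] [InnerProductSpace ℝ V]

/-- The coroot `α∨ = 2α/⟨α,α⟩`. -/
def coroot (α : V) : V := (2 / ⟪α, α⟫) • α

/-- The affine root `a = α∨ + r c` (encoded as the pair `(α, r)`), as an affine
function on `V`. -/
def aval (c : ℝ) (a : V × ℤ) (x : V) : ℝ := ⟪x, coroot a.1⟫ + a.2 * c

/-- The affine reflection `s_a(x) = x - a(x) α` attached to `a = α∨ + r c`. -/
def sAff (c : ℝ) (a : V × ℤ) (x : V) : V := x - aval c a x • a.1

/-- `w` maps the affine root `a` to the affine root `b`, i.e. `(wa)(x) = a(w⁻¹x) = b(x)`. -/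
def mapsRoot (c : ℝ) (w : Equiv.Perm V) (a b : V × ℤ) : Prop :=
  ∀ x : V, aval c a (w⁻¹ x) = aval c b x

/-- The linear part `w′` of an affine transformation `w`. -/
def linPart (w : Equiv.Perm V) (x : V) : V := w x - w 0

variable {R : Type*} [Field R]

/-- The difference-reflection operator `T̂_a`. -/
def hatT (c : ℝ) (τ : V × ℤ → R) (a : V × ℤ) (f : V → R) (x : V) : R :=
  if 0 < aval c a x then τ a * f (sAff c a x)
  else if aval c a x = 0 then τ a * f x
  else (τ a)⁻¹ * f (sAff c a x) + (τ a - (τ a)⁻¹) * f x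

/-- The discrete integral operator `J_a`. -/
def Jop (c : ℝ) (a : V × ℤ) (f : V → R) (x : V) : R :=
  if 0 < aval c a x then
    - ∑ k ∈ Finset.Icc (1 : ℤ) ⌊aval c a x⌋, f (x - k • a.1)
  else if aval c a x = 0 then 0
  else ∑ k ∈ Finset.Ico (0 : ℤ) (-⌊aval c a x⌋), f (x + k • a.1)

/-- The integral-reflection operator `I_a = τ_a s_a + (τ_a - τ_a⁻¹) J_a`. -/
def Iop (c : ℝ) (τ : V × ℤ → R) (a : V × ℤ) (f : V → R) (x : V) : R :=
  τ a * f (sAff c a x) + (τ a - (τ a)⁻¹) * Jop c a f x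

end AffineOps

/-- An irreducible reduced crystallographic root system spanning `V`, together with a
choice of positive roots, simple roots, and the highest short root. -/
structure RootSystemData (V : Type*) [NormedAddCommGroup V] [InnerProductSpace ℝ V] :
    Type _ where
  n : ℕ
  n_pos : 1 ≤ n
  rank_eq : Module.finrank ℝ V = n
  R0 : Finset V
  ne_zero : ∀ α ∈ R0, α ≠ (0 : V)
  span_top : Submodule.span ℝ (R0 : Set V) = ⊤
  reduced : ∀ α ∈ R0, ∀ t : ℝ, t • α ∈ R0 → t = 1 ∨ t = -1
  crystallographic : ∀ α ∈ R0, ∀ β ∈ R0, ∃ k : ℤ, ⟪β, coroot α⟫ = (k : ℝ)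
  reflect_mem : ∀ α ∈ R0, ∀ β ∈ R0, β - ⟪β, coroot α⟫ • α ∈ R0
  irreducible : ∀ S : Finset V, S ⊆ R0 →
      (∀ a ∈ S, ∀ b ∈ R0, b ∉ S → ⟪a, b⟫ = 0) → S = ∅ ∨ S = R0
  pos : Finset V
  pos_subset : pos ⊆ R0
  pos_or_neg : ∀ α ∈ R0, α ∈ pos ∨ -α ∈ pos
  pos_not_both : ∀ α ∈ pos, -α ∉ pos
  pos_add : ∀ α ∈ pos, ∀ β ∈ pos, α + β ∈ R0 → α + β ∈ pos
  simpleRoot : Fin n → V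
  simpleRoot_mem : ∀ j, simpleRoot j ∈ pos
  pos_natCombo : ∀ α ∈ pos, ∃ k : Fin n → ℕ, α = ∑ j, (k j : ℝ) • simpleRoot j
  hshort : V
  hshort_mem : hshort ∈ pos
  hshort_short : ∀ α ∈ R0, ‖hshort‖ ≤ ‖α‖
  hshort_highest : ∀ α ∈ R0, ‖α‖ = ‖hshort‖ →
      ∃ k : Fin n → ℕ, hshort - α = ∑ j, (k j : ℝ) • simpleRoot j

namespace RootSystemData

variable {V : Type*} [NormedAddCommGroup V] [InnerProductSpace ℝ V]
variable (D : RootSystemData V)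

/-- The weight lattice `P`. -/
def weightLattice : Set V :=
  {x : V | ∀ α ∈ D.R0, ∃ k : ℤ, ⟪x, coroot α⟫ = (k : ℝ)}

/-- The root lattice `Q`. -/
def rootLattice : Set V := (Submodule.span ℤ (D.R0 : Set V) : Set V)

/-- The coweight lattice `P∨`. -/
def coweightLattice : Set V :=
  {x : V | ∀ α ∈ D.R0, ∃ k : ℤ, ⟪x, α⟫ = (k : ℝ)}

/-- The dominant cone. -/
def dominant : Set V := {x : V | ∀ α ∈ D.pos, 0 ≤ ⟪x, coroot α⟫}

/-- `ω` is a minuscule (dominant) weight. -/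
def IsMinuscule (ω : V) : Prop :=
  ω ∈ D.weightLattice ∧ ω ∈ D.dominant ∧ ω ≠ 0 ∧
    ∀ α ∈ D.pos, ⟪ω, coroot α⟫ ≤ 1

/-- `ω` is the quasi-minuscule weight, i.e. the highest short root. -/
def IsQuasiMinuscule (ω : V) : Prop := ω = D.hshort

/-- The saturated set `P_ϑ` containing the (quasi-)minuscule weights. -/
def Ptheta : Set V :=
  {ν : V | ν ∈ D.weightLattice ∧ ∀ α ∈ D.R0, α ≠ ν → |⟪ν, coroot α⟫| ≤ 1}

/-- Half sum of the positive roots. -/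
def rhoHalf : V := (2⁻¹ : ℝ) • ∑ α ∈ D.pos, α

/-- Half sum of the positive coroots. -/
def rhoVee : V := (2⁻¹ : ℝ) • ∑ α ∈ D.pos, coroot α

/-- `(α, r)` encodes an affine root. -/
def IsAffRoot (a : V × ℤ) : Prop := a.1 ∈ D.R0

/-- `(α, r)` encodes a positive affine root. -/
def IsAffPos (a : V × ℤ) : Prop :=
  a.1 ∈ D.R0 ∧ (1 ≤ a.2 ∨ (a.2 = 0 ∧ a.1 ∈ D.pos))

/-- `(α, r)` encodes a negative affine root. -/
def IsAffNeg (a : V × ℤ) : Prop := D.IsAffPos (-a.1, -a.2)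

/-- The simple affine roots `a₀ = -ϑ∨ + c`, `a_j = α_j∨`. -/
def aSimple (j : Fin (D.n + 1)) : V × ℤ :=
  Fin.cons (α := fun _ => V × ℤ) (-D.hshort, (1 : ℤ))
    (fun i => (D.simpleRoot i, (0 : ℤ))) j

/-- The reflections generating the finite Weyl group `W₀`. -/
def W0Gens : Set (Equiv.Perm V) :=
  {e | ∃ α ∈ D.R0, ∀ x, e x = x - ⟪x, coroot α⟫ • α}

/-- The finite Weyl group `W₀`. -/
def W0 : Subgroup (Equiv.Perm V) := Subgroup.closure D.W0Gens

variable (c : ℝ)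

/-- The affine reflections generating the affine Weyl group `W_R`. -/
def AffGens : Set (Equiv.Perm V) :=
  {e | ∃ a : V × ℤ, D.IsAffRoot a ∧ ∀ x, e x = sAff c a x}

/-- The affine Weyl group `W_R`. -/
def WR : Subgroup (Equiv.Perm V) := Subgroup.closure (D.AffGens c)

/-- The translations `t_{cλ}`, `λ ∈ P`. -/
def TransGens : Set (Equiv.Perm V) :=
  {e | ∃ lam ∈ D.weightLattice, ∀ x : V, e x = x + c • lam}

/-- The extended affine Weyl group `W = W₀ ⋉ t(cP)`. -/
def Wext : Subgroup (Equiv.Perm V) :=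
  Subgroup.closure (D.AffGens c ∪ D.TransGens c)

/-- The set `R(w) = R⁺ ∩ w⁻¹(R⁻)`. -/
def RW (w : Equiv.Perm V) : Set (V × ℤ) :=
  {a | D.IsAffPos a ∧ ∃ b : V × ℤ, D.IsAffNeg b ∧ mapsRoot c w a b}

/-- The length `ℓ(w) = #R(w)`. -/
def len (w : Equiv.Perm V) : ℕ := (D.RW c w).ncard

/-- The closed fundamental alcove `A_c`. -/
def alcove : Set V := {x | ∀ a : V × ℤ, D.IsAffPos a → 0 ≤ aval c a x}

/-- `wmin x` is the unique shortest element of the affine Weyl group mapping `x` into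
the fundamental alcove. -/
def IsWmin (wmin : V → Equiv.Perm V) : Prop :=
  ∀ x : V, wmin x ∈ D.WR c ∧ (wmin x) x ∈ D.alcove c ∧
    ∀ w ∈ D.WR c, w x ∈ D.alcove c → D.len c (wmin x) < D.len c w ∨ w = wmin x

/-- One step in the Bruhat order: `w < w s_a` whenever `ℓ(w) < ℓ(w s_a)`. -/
def bruhatStep (w w' : Equiv.Perm V) : Prop :=
  ∃ a : V × ℤ, D.IsAffPos a ∧ ∃ e : Equiv.Perm V,
    (∀ x, e x = sAff c a x) ∧ w' = w * e ∧ D.len c w < D.len c w'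

/-- The Bruhat order on the affine Weyl group. -/
def bruhatLE (w w' : Equiv.Perm V) : Prop :=
  Relation.ReflTransGen (D.bruhatStep c) w w'

/-- The partial order on `V`: `x ≤ y` iff `x₊ = y₊` and `w_x ≤ w_y` (Bruhat). -/
def vle (wmin : V → Equiv.Perm V) (x y : V) : Prop :=
  (wmin x) x = (wmin y) y ∧ D.bruhatLE c (wmin x) (wmin y)

/-- The interval `[x, y]` for the order `vle`. -/
def vInterval (wmin : V → Equiv.Perm V) (x y : V) : Set V :=
  {z : V | D.vle c wmin x z ∧ D.vle c wmin z y}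

/-- The partial order `⪯` on the weight lattice:
`μ ⪯ λ` iff `λ - μ ∈ Q` and `Conv [μ₊, μ] ⊆ Conv [λ₊, λ]`. -/
def pleq (wmin : V → Equiv.Perm V) (μ lam : V) : Prop :=
  lam - μ ∈ D.rootLattice ∧
    convexHull ℝ (D.vInterval c wmin ((wmin μ) μ) μ)
      ⊆ convexHull ℝ (D.vInterval c wmin ((wmin lam) lam) lam)

section Ops

variable {R : Type*} [Field R]

/-- `τ` is a multiplicity function: nonvanishing on affine roots, and invariant
under the (extended affine) Weyl group action on the affine roots. -/
def IsMultiplicity (τ : V × ℤ → R) : Prop :=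
  (∀ a : V × ℤ, D.IsAffRoot a → τ a ≠ 0) ∧
    ∀ w ∈ D.Wext c, ∀ a b : V × ℤ, D.IsAffRoot a → D.IsAffRoot b →
      mapsRoot c w a b → τ a = τ b

/-- `τ_w = ∏_{a ∈ R(w)} τ_a`. -/
def tauw (τ : V × ℤ → R) (w : Equiv.Perm V) : R := ∏ᶠ a ∈ D.RW c w, τ a

/-- `τ₀`, the multiplicity of the affine simple root `a₀`. -/
def tauZero (τ : V × ℤ → R) : R := τ (-D.hshort, (1 : ℤ))

/-- The operator `I_{j₁} ∘ ⋯ ∘ I_{jℓ}` attached to a word in the simple reflections. -/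
def wordOp (τ : V × ℤ → R) (l : List (Fin (D.n + 1))) : (V → R) → V → R :=
  (l.map fun j => Iop c τ (D.aSimple j)).foldr (· ∘ ·) id

/-- `l` is a reduced word for `w`, i.e. `w = s_{j₁} ∘ ⋯ ∘ s_{jℓ}` with `ℓ = ℓ(w)`. -/
def IsReducedWord (w : Equiv.Perm V) (l : List (Fin (D.n + 1))) : Prop :=
  l.length = D.len c w ∧
    ∀ x : V, w x = ((l.map fun j => sAff c (D.aSimple j)).foldr (· ∘ ·) id) x

/-- `e∨_τ(η) = ∏_{α ∈ R₀⁺} τ_{α∨}^{⟨η,α∨⟩}`. -/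
def etau (τ : V × ℤ → R) (η : V) : R :=
  ∏ α ∈ D.pos, τ (α, (0 : ℤ)) ^ ⌊⟪η, coroot α⟫⌋

/-- `h∨_τ = τ₀² e∨_τ(ϑ)`. -/
def hvee (τ : V × ℤ → R) : R := D.tauZero τ ^ 2 * D.etau τ D.hshort

/-- `θ(μ) = #{b ∈ R(w_μ) : b(μ) = -2}`. -/
def theta (wmin : V → Equiv.Perm V) (μ : V) : ℕ :=
  {b : V × ℤ | b ∈ D.RW c (wmin μ) ∧ aval c b μ = -2}.ncard

/-- The coefficient `c_{λ,η} = θ(λ-η) e∨_τ(η) (h∨_τ)^{-sign⟨λ,η∨⟩}`. -/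
def ccoef (τ : V × ℤ → R) (wmin : V → Equiv.Perm V) (lam η : V) : R :=
  (D.theta c wmin (lam - η) : R) * D.etau τ η *
    D.hvee τ ^ (-sgnZ ⟪lam, coroot η⟫)

/-- The coefficient `a_{λ,ν} = τ_{w_{w_λ(λ-ν)}} τ_{w_{w_λ(λ-ν)} w_λ} τ_{w_λ}⁻¹`. -/
def acoef (τ : V × ℤ → R) (wmin : V → Equiv.Perm V) (lam ν : V) : R :=
  D.tauw c τ (wmin ((wmin lam) (lam - ν))) *
    D.tauw c τ (wmin ((wmin lam) (lam - ν)) * wmin lam) *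
    (D.tauw c τ (wmin lam))⁻¹

/-- The coefficient `b_{λ,ν}`. -/
def bcoef (τ : V × ℤ → R) (wmin : V → Equiv.Perm V) (lam ν : V) : R :=
  if (wmin (lam - ν)) (lam - ν) = (wmin lam) lam then
    D.tauw c τ (wmin ((wmin lam) (lam - ν))) ^ 2 *
      (if D.IsAffNeg (ν, ⌊(1 - ⟪lam, coroot ν⟫) / c⌋) then 1 else 0)
  else D.ccoef c τ wmin ((wmin lam) lam) (linPart (wmin lam) ν)

/-- The intertwining operator `(𝒥f)(λ) = τ_{w_λ}⁻¹ (I_{w_λ} f)(λ₊)`, where `Iw` assigns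
to each `w_λ` the composite of integral-reflection operators along a reduced word. -/
def Jcal (τ : V × ℤ → R) (wmin : V → Equiv.Perm V)
    (Iw : Equiv.Perm V → (V → R) → V → R) (f : V → R) (x : V) : R :=
  (D.tauw c τ (wmin x))⁻¹ * Iw (wmin x) f ((wmin x) x)

end Ops

/-- The Yang–Yang type Morse function `𝒱_μ`. -/
def morse (t : V → ℝ) (μ ξ : V) : ℝ :=
  (c / 2) * ⟪ξ, ξ⟫ - 2 * Real.pi * ⟪D.rhoVee + μ, ξ⟫ +
    ∑ α ∈ D.pos, (2 / ⟪α, α⟫) * ∫ x in (0:ℝ)..(⟪ξ, α⟫), mvfun (t α) x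

/-- The critical equation `cξ + ∑_{α>0} v_α(⟨ξ,α⟩) α∨ = 2π(ρ∨+μ)`. -/
def criticalEq (t : V → ℝ) (μ ξ : V) : Prop :=
  c • ξ + ∑ α ∈ D.pos, mvfun (t α) ⟪ξ, α⟫ • coroot α
    = (2 * Real.pi) • (D.rhoVee + μ)

/-- The Hessian bilinear form `H_{η,ζ}(ξ)`. -/
def hessForm (t : V → ℝ) (ξ η ζ : V) : ℝ :=
  c * ⟪η, ζ⟫ + ∑ α ∈ D.R0,
    (1 - t α ^ 2) * ⟪η, α⟫ * ⟪ζ, α⟫ /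
      (⟪α, α⟫ * (1 - 2 * t α * Real.cos ⟪ξ, α⟫ + t α ^ 2))

/-- `κ_± = (2/n) ∑_{α>0} (1-t_α²)/(1 ± |t_α|)²`; here `s = ±1`. -/
def kappaPM (t : V → ℝ) (s : ℝ) : ℝ :=
  (2 / (D.n : ℝ)) * ∑ α ∈ D.pos, (1 - t α ^ 2) / (1 + s * |t α|) ^ 2

end RootSystemData

section Aux1

variable {V : Type*} [NormedAddCommGroup V] [InnerProductSpace ℝ V]

lemma inner_self_ne_zero' {α : V} (hα : α ≠ 0) : ⟪α, α⟫ ≠ 0 :=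
  fun h => hα ((inner_self_eq_zero (𝕜 := ℝ)).1 h)

lemma inner_self_coroot {α : V} (hα : α ≠ 0) : ⟪α, coroot α⟫ = 2 := by
  have h := inner_self_ne_zero' hα
  simp only [coroot, real_inner_smul_right]
  field_simp

lemma inner_coroot_eq {β : V} (x : V) (hβ : β ≠ 0) :
    ⟪x, coroot β⟫ = 2 * ⟪x, β⟫ / ⟪β, β⟫ := by
  simp only [coroot, real_inner_smul_right]; ring

lemma coroot_neg (α : V) : coroot (-α) = - coroot α := by
  simp [coroot, inner_neg_neg]

lemma inner_reflect_self (α β : V) (hα : α ≠ 0) :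
    ⟪β - ⟪β, coroot α⟫ • α, β - ⟪β, coroot α⟫ • α⟫ = ⟪β, β⟫ := by
  have h2 : ⟪α, coroot α⟫ = 2 := inner_self_coroot hα
  have hca : ⟪β, coroot α⟫ * ⟪α, α⟫ = 2 * ⟪β, α⟫ := by
    have h := inner_self_ne_zero' hα
    simp only [coroot, real_inner_smul_right]
    field_simp; try ring
  simp only [inner_sub_sub_self, real_inner_smul_right, real_inner_smul_left]
  linear_combination (⟪β, coroot α⟫ : ℝ) * hca - ⟪β, coroot α⟫ * real_inner_comm β α

lemma norm_reflect (α β : V) (hα : α ≠ 0) :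
    ‖β - ⟪β, coroot α⟫ • α‖ = ‖β‖ := by
  have h := inner_reflect_self α β hα
  rw [real_inner_self_eq_norm_sq, real_inner_self_eq_norm_sq] at h
  rw [← Real.sqrt_sq (norm_nonneg (β - ⟪β, coroot α⟫ • α)), h,
    Real.sqrt_sq (norm_nonneg β)]

lemma coroot_reflect (α β : V) (hα : α ≠ 0) (hβ : β ≠ 0) :
    coroot (β - ⟪β, coroot α⟫ • α) = coroot β - ⟪α, coroot β⟫ • coroot α := by
  have hαα := inner_self_ne_zero' hα
  have hββ := inner_self_ne_zero' hβ
  have hss := inner_reflect_self α β hα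
  have step1 : coroot (β - ⟪β, coroot α⟫ • α) = (2 / ⟪β, β⟫) • (β - ⟪β, coroot α⟫ • α) := by
    show (2 / ⟪β - ⟪β, coroot α⟫ • α, β - ⟪β, coroot α⟫ • α⟫) • _ = _
    rw [hss]
  rw [step1]
  simp only [coroot, real_inner_smul_right, smul_sub, smul_smul]
  congr 1
  congr 1
  rw [real_inner_comm α β]
  ring

end Aux1
section Aux2

variable {V : Type*} [NormedAddCommGroup V] [InnerProductSpace ℝ V]

lemma aval_sAff_self (c : ℝ) (a : V × ℤ) (ha : a.1 ≠ 0) (x : V) :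
    aval c a (sAff c a x) = - aval c a x := by
  simp only [aval, sAff, inner_sub_left, real_inner_smul_left, inner_self_coroot ha]
  ring

lemma sAff_invol (c : ℝ) (a : V × ℤ) (ha : a.1 ≠ 0) (x : V) :
    sAff c a (sAff c a x) = x := by
  rw [show sAff c a (sAff c a x) = sAff c a x - aval c a (sAff c a x) • a.1 from rfl,
    aval_sAff_self c a ha x]
  simp [sAff]

/-- The action of the reflection `s_A` on affine roots, as a map on pairs. -/
def phiA (A a : V × ℤ) : V × ℤ :=
  (a.1 - ⟪a.1, coroot A.1⟫ • A.1, a.2 - A.2 * ⌊⟪A.1, coroot a.1⟫⌋)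

lemma aval_phiA (c : ℝ) (A a : V × ℤ) (hA : A.1 ≠ 0) (ha : a.1 ≠ 0)
    (hk : ((⌊⟪A.1, coroot a.1⟫⌋ : ℤ) : ℝ) = ⟪A.1, coroot a.1⟫) (y : V) :
    aval c (phiA A a) y = aval c a (sAff c A y) := by
  simp only [phiA, aval, sAff, inner_sub_right, real_inner_smul_right,
    coroot_reflect A.1 a.1 hA ha, inner_sub_left, real_inner_smul_left]
  push_cast
  rw [hk]
  ring

end Aux2
namespace RootSystemData

variable {V : Type*} [NormedAddCommGroup V] [InnerProductSpace ℝ V]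
variable (D : RootSystemData V)

lemma root_ne_zero {α : V} (h : α ∈ D.R0) : α ≠ 0 := D.ne_zero α h

lemma neg_mem_R0 {α : V} (h : α ∈ D.R0) : -α ∈ D.R0 := by
  have := D.reflect_mem α h α h
  rwa [inner_self_coroot (D.root_ne_zero h), show (2:ℝ) • α = α + α by
    rw [two_smul], show α - (α + α) = -α by abel] at this

lemma pos_mem_R0 {α : V} (h : α ∈ D.pos) : α ∈ D.R0 := D.pos_subset h

lemma hshort_R0 : D.hshort ∈ D.R0 := D.pos_mem_R0 D.hshort_mem

lemma span_simples : ⊤ ≤ Submodule.span ℝ (Set.range D.simpleRoot) := by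
  rw [← D.span_top]
  rw [Submodule.span_le]
  intro α hα
  have hmem : ∀ β ∈ D.pos, β ∈ Submodule.span ℝ (Set.range D.simpleRoot) := by
    intro β hβ
    obtain ⟨k, hk⟩ := D.pos_natCombo β hβ
    rw [hk]
    exact Submodule.sum_mem _ fun j _ => Submodule.smul_mem _ _
      (Submodule.subset_span ⟨j, rfl⟩)
  rcases D.pos_or_neg α hα with h | h
  · exact hmem α h
  · have := hmem (-α) h
    simpa using Submodule.neg_mem _ this

lemma linIndep_simples : LinearIndependent ℝ D.simpleRoot := by
  apply linearIndependent_of_top_le_span_of_card_eq_finrank D.span_simples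
  simp [D.rank_eq]

/-- Coefficient-killing: if a nonnegative combination of simple roots is zero,
all coefficients vanish. -/
lemma natCombo_eq_zero {k k' : Fin D.n → ℕ}
    (h : ∑ j, (k j : ℝ) • D.simpleRoot j + ∑ j, (k' j : ℝ) • D.simpleRoot j = 0) :
    ∀ j, k j = 0 ∧ k' j = 0 := by
  have h2 : ∑ j, ((k j : ℝ) + (k' j : ℝ)) • D.simpleRoot j = 0 := by
    rw [← h, ← Finset.sum_add_distrib]
    congr 1; ext j; rw [add_smul]
  have := Fintype.linearIndependent_iff.1 D.linIndep_simples _ h2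
  intro j
  have hj := this j
  constructor <;> [skip; skip] <;>
  · have hk := (Nat.cast_nonneg (α := ℝ) (k j))
    have hk' := (Nat.cast_nonneg (α := ℝ) (k' j))
    have : (k j : ℝ) = 0 ∧ (k' j : ℝ) = 0 := by constructor <;> linarith
    first
      | exact_mod_cast this.1
      | exact_mod_cast this.2

/-- Dominance of the highest short root. -/
lemma hshort_dominant {δ : V} (hδ : δ ∈ D.pos) : 0 ≤ ⟪δ, D.hshort⟫ := by
  by_contra hneg
  push_neg at hneg
  set ϑ := D.hshort with hθ
  have hδ0 : δ ≠ 0 := D.root_ne_zero (D.pos_mem_R0 hδ)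
  have hδδ : (0:ℝ) < ⟪δ, δ⟫ := by
    rw [real_inner_self_eq_norm_sq]
    have := norm_pos_iff.2 hδ0
    positivity
  -- k := -⟪ϑ, coroot δ⟫ > 0
  have hk : ⟪ϑ, coroot δ⟫ < 0 := by
    rw [inner_coroot_eq ϑ hδ0]
    rw [show ⟪ϑ, δ⟫ = ⟪δ, ϑ⟫ from real_inner_comm _ _]
    exact div_neg_of_neg_of_pos (by linarith) hδδ
  have hmem : ϑ - ⟪ϑ, coroot δ⟫ • δ ∈ D.R0 :=
    D.reflect_mem δ (D.pos_mem_R0 hδ) ϑ D.hshort_R0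
  have hnorm : ‖ϑ - ⟪ϑ, coroot δ⟫ • δ‖ = ‖ϑ‖ := norm_reflect δ ϑ hδ0
  obtain ⟨m, hm⟩ := D.hshort_highest _ hmem hnorm
  obtain ⟨d, hd⟩ := D.pos_natCombo δ hδ
  -- ϑ - (ϑ - kδ) = kδ  where k = ⟪ϑ, coroot δ⟫ < 0
  have hms : ∑ j, (m j : ℝ) • D.simpleRoot j = ⟪ϑ, coroot δ⟫ • δ := by
    rw [← hm]; abel
  -- so ∑ m_j α_j + (-k) ∑ d_j α_j = 0 with -k > 0
  have hzero : ∑ j, ((m j : ℝ) + (- ⟪ϑ, coroot δ⟫) * (d j : ℝ)) • D.simpleRoot j = 0 := by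
    have : ∑ j, ((- ⟪ϑ, coroot δ⟫) * (d j : ℝ)) • D.simpleRoot j
        = (- ⟪ϑ, coroot δ⟫) • δ := by
      rw [hd, Finset.smul_sum]
      congr 1; ext j; rw [smul_smul]
    calc ∑ j, ((m j : ℝ) + (- ⟪ϑ, coroot δ⟫) * (d j : ℝ)) • D.simpleRoot j
        = ∑ j, (m j : ℝ) • D.simpleRoot j
          + ∑ j, ((- ⟪ϑ, coroot δ⟫) * (d j : ℝ)) • D.simpleRoot j := by
          rw [← Finset.sum_add_distrib]; congr 1; ext j; rw [add_smul]
      _ = ⟪ϑ, coroot δ⟫ • δ + (- ⟪ϑ, coroot δ⟫) • δ := by rw [hms, this]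
      _ = 0 := by rw [← add_smul]; simp
  have hco := Fintype.linearIndependent_iff.1 D.linIndep_simples _ hzero
  -- each coefficient zero forces d j = 0
  have hdz : ∀ j, (d j : ℝ) = 0 := by
    intro j
    have := hco j
    have hmj : (0:ℝ) ≤ (m j : ℝ) := Nat.cast_nonneg _
    have hdj : (0:ℝ) ≤ (d j : ℝ) := Nat.cast_nonneg _
    nlinarith
  have : δ = 0 := by
    rw [hd]
    apply Finset.sum_eq_zero
    intro j _
    rw [hdz j, zero_smul]
  exact hδ0 this

end RootSystemData
namespace RootSystemData

variable {V : Type*} [NormedAddCommGroup V] [InnerProductSpace ℝ V]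
variable (D : RootSystemData V)

/-- A root proportional to another root is `±` it. -/
lemma parallel_root {α β : V} (hα : α ∈ D.R0) (hβ : β ∈ D.R0) {t : ℝ}
    (h : β = t • α) : β = α ∨ β = -α := by
  have := D.reduced α hα t (by rw [← h]; exact hβ)
  rcases this with h1 | h1
  · left; rw [h, h1, one_smul]
  · right; rw [h, h1, neg_one_smul]

/-- For roots `β ≠ ±ϑ`, the Cartan integer `⟪ϑ, β∨⟫` is `-1`, `0` or `1`. -/
lemma theta_pairing_small {β : V} (hβ : β ∈ D.R0) (h1 : β ≠ D.hshort)
    (h2 : β ≠ -D.hshort) {m : ℤ} (hm : (m : ℝ) = ⟪D.hshort, coroot β⟫) :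
    m = -1 ∨ m = 0 ∨ m = 1 := by
  set ϑ := D.hshort with hϑ
  have hβ0 : β ≠ 0 := D.root_ne_zero hβ
  have hϑ0 : ϑ ≠ 0 := D.root_ne_zero D.hshort_R0
  have hβn : (0:ℝ) < ‖β‖ := norm_pos_iff.2 hβ0
  have hϑn : (0:ℝ) < ‖ϑ‖ := norm_pos_iff.2 hϑ0
  have hle : ‖ϑ‖ ≤ ‖β‖ := D.hshort_short β hβ
  have hCS : |⟪ϑ, β⟫| ≤ ‖ϑ‖ * ‖β‖ := abs_real_inner_le_norm ϑ β
  have hval : (m : ℝ) = 2 * ⟪ϑ, β⟫ / ‖β‖ ^ 2 := by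
    rw [hm, inner_coroot_eq ϑ hβ0, real_inner_self_eq_norm_sq]
  have habs : |(m:ℝ)| ≤ 2 := by
    rw [hval, abs_div, abs_mul]
    rw [abs_of_nonneg (by positivity : (0:ℝ) ≤ ‖β‖^2)]
    rw [div_le_iff₀ (by positivity)]
    have : ‖ϑ‖ * ‖β‖ ≤ ‖β‖ * ‖β‖ := by nlinarith
    simp only [abs_two]
    nlinarith
  have habs' := abs_le.1 habs
  have hm2a : (-2:ℤ) ≤ m := by exact_mod_cast (by push_cast; linarith : ((-2:ℤ):ℝ) ≤ (m:ℝ))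
  have hm2b : m ≤ (2:ℤ) := by exact_mod_cast (by push_cast; linarith : ((m:ℤ):ℝ) ≤ ((2:ℤ):ℝ))
  -- rule out m = ±2
  have hnot2 : m ≠ 2 ∧ m ≠ -2 := by
    constructor <;> intro hEq
    · -- ⟪ϑ,β⟫ = ‖β‖²  forces β = ϑ
      have hip : ⟪ϑ, β⟫ = ‖β‖ ^ 2 := by
        rw [hEq] at hval; push_cast at hval
        field_simp at hval; linarith
      have heq : ⟪ϑ, β⟫ = ‖ϑ‖ * ‖β‖ := by
        have h3 : ‖β‖^2 ≤ ‖ϑ‖ * ‖β‖ := by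
          rw [← hip]; exact le_trans (le_abs_self _) hCS
        nlinarith
      have := inner_eq_norm_mul_iff_real.1 heq
      -- ‖β‖ • ϑ = ‖ϑ‖ • β
      have hϑβ : ‖ϑ‖ = ‖β‖ := by nlinarith [heq, le_trans (le_abs_self _) hCS]
      have : β = ϑ := by
        have h5 : ‖β‖ • ϑ = ‖β‖ • β := by rw [this, hϑβ]
        have := smul_right_injective V (ne_of_gt hβn) h5
        exact this.symm
      exact h1 this
    · have hip : ⟪ϑ, β⟫ = -(‖β‖ ^ 2) := by
        rw [hEq] at hval; push_cast at hval
        field_simp at hval; linarith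
      have heq : ⟪ϑ, -β⟫ = ‖ϑ‖ * ‖-β‖ := by
        rw [inner_neg_right, hip, norm_neg]
        have h3 : ‖β‖^2 ≤ ‖ϑ‖ * ‖β‖ := by
          have : |⟪ϑ, β⟫| = ‖β‖^2 := by rw [hip]; rw [abs_neg, abs_of_nonneg]; positivity
          rw [← this]; exact hCS
        nlinarith
      have := inner_eq_norm_mul_iff_real.1 heq
      have hϑβ : ‖ϑ‖ = ‖β‖ := by
        have h4 := le_trans (le_abs_self _) (abs_real_inner_le_norm ϑ (-β))
        rw [heq] at h4
        have h3 : ‖β‖^2 ≤ ‖ϑ‖ * ‖β‖ := by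
          have : |⟪ϑ, β⟫| = ‖β‖^2 := by rw [hip]; rw [abs_neg, abs_of_nonneg]; positivity
          rw [← this]; exact hCS
        nlinarith
      have : -β = ϑ := by
        have h5 : ‖-β‖ • ϑ = ‖-β‖ • (-β) := by
          rw [this, hϑβ, norm_neg]
        have := smul_right_injective V (by rw [norm_neg]; exact ne_of_gt hβn) h5
        exact this.symm
      exact h2 (by rw [← this, neg_neg])
  omega

/-- Simple reflections permute the other positive roots. -/
lemma simple_reflect_pos (j : Fin D.n) {β : V} (hβ : β ∈ D.pos)
    (hne : β ≠ D.simpleRoot j) :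
    β - ⟪β, coroot (D.simpleRoot j)⟫ • D.simpleRoot j ∈ D.pos := by
  set αj := D.simpleRoot j with hαj
  have hαjR : αj ∈ D.R0 := D.pos_mem_R0 (D.simpleRoot_mem j)
  have hγR : β - ⟪β, coroot αj⟫ • αj ∈ D.R0 :=
    D.reflect_mem αj hαjR β (D.pos_mem_R0 hβ)
  rcases D.pos_or_neg _ hγR with h | h
  · exact h
  exfalso
  -- -γ ∈ pos: write everything in simple roots
  obtain ⟨k, hk⟩ := D.pos_natCombo β hβ
  obtain ⟨cc, hcc⟩ := D.pos_natCombo _ h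
  set cβ := ⟪β, coroot αj⟫ with hcβ
  -- β + (-γ) = cβ • αj
  have hsum : ∑ i, ((k i : ℝ) + (cc i : ℝ)) • D.simpleRoot i = cβ • αj := by
    have : ∑ i, ((k i : ℝ) + (cc i : ℝ)) • D.simpleRoot i
        = ∑ i, (k i : ℝ) • D.simpleRoot i + ∑ i, (cc i : ℝ) • D.simpleRoot i := by
      rw [← Finset.sum_add_distrib]; congr 1; ext i; rw [add_smul]
    rw [this, ← hk, ← hcc]
    abel
  have hzero : ∑ i, (((k i : ℝ) + (cc i : ℝ)) - (if i = j then cβ else 0)) • D.simpleRoot i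
      = 0 := by
    have hsplit : ∑ i, (((k i : ℝ) + (cc i : ℝ)) - (if i = j then cβ else 0)) • D.simpleRoot i
        = ∑ i, ((k i : ℝ) + (cc i : ℝ)) • D.simpleRoot i
          - ∑ i, (if i = j then cβ else 0) • D.simpleRoot i := by
      rw [← Finset.sum_sub_distrib]; congr 1; ext i; rw [sub_smul]
    rw [hsplit, hsum]
    rw [Finset.sum_eq_single j (by intro b _ hb; simp [hb]) (by simp)]
    simp [hαj]
  have hco := Fintype.linearIndependent_iff.1 D.linIndep_simples _ hzero
  -- for i ≠ j, k i = 0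
  have hki : ∀ i, i ≠ j → (k i : ℝ) = 0 := by
    intro i hi
    have := hco i
    simp [hi] at this
    have h1 : (0:ℝ) ≤ (k i : ℝ) := Nat.cast_nonneg _
    have h2 : (0:ℝ) ≤ (cc i : ℝ) := Nat.cast_nonneg _
    linarith
  -- so β = k j • αj
  have hβeq : β = ((k j : ℕ) : ℝ) • αj := by
    rw [hk, Finset.sum_eq_single j (by intro b _ hb; rw [hki b hb, zero_smul]) (by simp)]
  rcases D.parallel_root hαjR (D.pos_mem_R0 hβ) hβeq with hE | hE
  · exact hne hE
  · -- β = -αj : but both β and αj are positive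
    have := D.pos_not_both αj (D.simpleRoot_mem j)
    rw [← hE] at this
    exact this hβ

end RootSystemData
namespace RootSystemData

variable {V : Type*} [NormedAddCommGroup V] [InnerProductSpace ℝ V]
variable (D : RootSystemData V)

lemma aSimple_zero : D.aSimple 0 = (-D.hshort, (1 : ℤ)) := by
  simp [aSimple]

lemma aSimple_succ (i : Fin D.n) : D.aSimple i.succ = (D.simpleRoot i, (0 : ℤ)) := by
  simp [aSimple]

lemma aSimple_affRoot (j : Fin (D.n + 1)) : D.IsAffRoot (D.aSimple j) := by
  induction j using Fin.cases with
  | zero => rw [IsAffRoot, D.aSimple_zero]; exact D.neg_mem_R0 D.hshort_R0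
  | succ i => rw [IsAffRoot, D.aSimple_succ]; exact D.pos_mem_R0 (D.simpleRoot_mem i)

lemma aSimple_fst_ne_zero (j : Fin (D.n + 1)) : (D.aSimple j).1 ≠ 0 :=
  D.root_ne_zero (D.aSimple_affRoot j)

/-- KEY: a positive affine root other than the simple root `a_j` stays positive
under the reflection `s_j`. -/
lemma affPos_phiA (j : Fin (D.n + 1)) {a : V × ℤ} (ha : D.IsAffPos a)
    (hne : a ≠ D.aSimple j) : D.IsAffPos (phiA (D.aSimple j) a) := by
  obtain ⟨haR, hpos⟩ := ha
  induction j using Fin.cases with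
  | succ i =>
    rw [D.aSimple_succ] at hne ⊢
    have hγR : a.1 - ⟪a.1, coroot (D.simpleRoot i)⟫ • D.simpleRoot i ∈ D.R0 :=
      D.reflect_mem _ (D.pos_mem_R0 (D.simpleRoot_mem i)) _ haR
    refine ⟨hγR, ?_⟩
    simp only [phiA]
    rcases hpos with hr | ⟨hr0, hfst⟩
    · left; simpa using hr
    · right
      refine ⟨by simpa using hr0, ?_⟩
      have hfne : a.1 ≠ D.simpleRoot i := fun hEq => hne (Prod.ext hEq hr0)
      simpa using D.simple_reflect_pos i hfst hfne
  | zero =>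
    rw [D.aSimple_zero] at hne ⊢
    set ϑ := D.hshort with hϑdef
    set β := a.1 with hβdef
    have hϑR : ϑ ∈ D.R0 := D.hshort_R0
    have hϑ0 : ϑ ≠ 0 := D.root_ne_zero hϑR
    have hβ0 : β ≠ 0 := D.root_ne_zero haR
    have hββ : (0:ℝ) < ⟪β, β⟫ := by
      rw [real_inner_self_eq_norm_sq]
      have := norm_pos_iff.2 hβ0
      positivity
    have hϑϑ : (0:ℝ) < ⟪ϑ, ϑ⟫ := by
      rw [real_inner_self_eq_norm_sq]
      have := norm_pos_iff.2 hϑ0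
      positivity
    obtain ⟨k, hk⟩ := D.crystallographic β haR ϑ hϑR
    have hγR : β - ⟪β, coroot ϑ⟫ • ϑ ∈ D.R0 := D.reflect_mem ϑ hϑR β haR
    have hφ1 : (phiA (-ϑ, (1:ℤ)) a).1 = β - ⟪β, coroot ϑ⟫ • ϑ := by
      simp only [phiA, coroot_neg, inner_neg_right, neg_smul, smul_neg, neg_neg,
        ← hβdef]
    have hφ2 : (phiA (-ϑ, (1:ℤ)) a).2 = a.2 + k := by
      simp only [phiA]
      rw [inner_neg_left, hk, ← Int.cast_neg, Int.floor_intCast]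
      ring
    have hkval : (k:ℝ) = 2 * ⟪ϑ, β⟫ / ⟪β, β⟫ := by
      rw [← hk, inner_coroot_eq ϑ hβ0]
    have hcβ : ⟪β, coroot ϑ⟫ * ⟪ϑ, ϑ⟫ = 2 * ⟪β, ϑ⟫ := by
      rw [inner_coroot_eq β hϑ0]
      field_simp
    rw [IsAffPos, hφ1, hφ2]
    by_cases hc1 : β = ϑ
    · -- k = 2
      have hk2 : k = 2 := by
        have : ⟪ϑ, coroot β⟫ = 2 := by rw [hc1, inner_self_coroot hϑ0]
        exact_mod_cast (hk.symm.trans this)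
      have hγ : β - ⟪β, coroot ϑ⟫ • ϑ = -ϑ := by
        rw [hc1, inner_self_coroot hϑ0]
        rw [show (2:ℝ) • ϑ = ϑ + ϑ by rw [two_smul]]
        abel
      have hr : 0 ≤ a.2 := by rcases hpos with h | ⟨h, _⟩ <;> omega
      exact ⟨by rw [hγ]; exact D.neg_mem_R0 hϑR, Or.inl (by omega)⟩
    by_cases hc2 : β = -ϑ
    · -- k = -2, a.2 ≥ 2
      have hk2 : k = -2 := by
        have : ⟪ϑ, coroot β⟫ = -2 := by
          rw [hc2, coroot_neg, inner_neg_right, inner_self_coroot hϑ0]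
        exact_mod_cast (hk.symm.trans this)
      have hγ : β - ⟪β, coroot ϑ⟫ • ϑ = ϑ := by
        rw [hc2, inner_neg_left, inner_self_coroot hϑ0]
        rw [show (-(2:ℝ)) • ϑ = -ϑ - ϑ by rw [neg_smul, two_smul]; abel]
        abel
      have hnpos : a.2 ≥ 1 := by
        rcases hpos with h | ⟨h0, hβp⟩
        · exact h
        · exfalso
          have := D.pos_not_both ϑ D.hshort_mem
          rw [← hc2] at this
          exact this hβp
      have hr2 : a.2 ≠ 1 := by
        intro hEq
        apply hne
        apply Prod.ext
        · exact hc2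
        · exact hEq
      refine ⟨by rw [hγ]; exact hϑR, ?_⟩
      rcases (by omega : 1 ≤ a.2 + k ∨ a.2 + k = 0) with h | h
      · exact Or.inl h
      · exact Or.inr ⟨h, by rw [hγ]; exact D.hshort_mem⟩
    · -- generic case: k ∈ {-1,0,1}
      have hksmall := D.theta_pairing_small haR hc1 hc2 hk.symm
      refine ⟨hγR, ?_⟩
      rcases hpos with hr | ⟨hr0, hβp⟩
      · -- a.2 ≥ 1
        rcases (by omega : 1 ≤ a.2 + k ∨ (a.2 = 1 ∧ k = -1)) with h | ⟨h1, hkm⟩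
        · exact Or.inl h
        · -- r' = 0, need γ ∈ pos
          right
          refine ⟨by omega, ?_⟩
          have hϑβ : ⟪ϑ, β⟫ < 0 := by
            by_contra hge
            push_neg at hge
            have : (0:ℝ) ≤ (k:ℝ) := by
              rw [hkval]
              exact div_nonneg (by linarith) (le_of_lt hββ)
            rw [hkm] at this
            norm_num at this
          have hγϑ : (0:ℝ) < ⟪β - ⟪β, coroot ϑ⟫ • ϑ, ϑ⟫ := by
            rw [inner_sub_left, real_inner_smul_left]
            have hcomm : ⟪β, ϑ⟫ = ⟪ϑ, β⟫ := real_inner_comm ϑ β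
            nlinarith
          rcases D.pos_or_neg _ hγR with h | h
          · exact h
          · exfalso
            have hdom := D.hshort_dominant h
            rw [inner_neg_left] at hdom
            linarith
      · -- a.2 = 0, β positive
        have hβϑnn : 0 ≤ ⟪β, ϑ⟫ := D.hshort_dominant hβp
        have hknn : 0 ≤ k := by
          have : (0:ℝ) ≤ (k:ℝ) := by
            rw [hkval]
            have : ⟪ϑ, β⟫ = ⟪β, ϑ⟫ := real_inner_comm β ϑ
            exact div_nonneg (by linarith) (le_of_lt hββ)
          exact_mod_cast this
        rcases (by omega : k = 1 ∨ k = 0) with h | h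
        · exact Or.inl (by omega)
        · right
          refine ⟨by omega, ?_⟩
          have hϑβ0 : ⟪ϑ, β⟫ = 0 := by
            have : (k:ℝ) = 0 := by rw [h]; norm_num
            rw [hkval] at this
            field_simp at this
            linarith
          have hcβ0 : ⟪β, coroot ϑ⟫ = 0 := by
            rw [inner_coroot_eq β hϑ0,
              show ⟪β, ϑ⟫ = (0:ℝ) from ((real_inner_comm β ϑ).symm.trans hϑβ0)]
            simp
          rw [hcβ0, zero_smul, sub_zero]
          exact hβp

end RootSystemData
namespace RootSystemData

variable {V : Type*} [NormedAddCommGroup V] [InnerProductSpace ℝ V]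
variable (D : RootSystemData V)

lemma refl_inv_eq {c : ℝ} {e : Equiv.Perm V} {j : Fin (D.n + 1)}
    (he : ∀ x, e x = sAff c (D.aSimple j) x) :
    ∀ x, e⁻¹ x = sAff c (D.aSimple j) x := by
  intro x
  have : e (sAff c (D.aSimple j) x) = x := by
    rw [he, sAff_invol c _ (D.aSimple_fst_ne_zero j)]
  calc e⁻¹ x = e⁻¹ (e (sAff c (D.aSimple j) x)) := by rw [this]
    _ = sAff c (D.aSimple j) x := by simp

lemma refl_mul_self {c : ℝ} {e : Equiv.Perm V} {j : Fin (D.n + 1)}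
    (he : ∀ x, e x = sAff c (D.aSimple j) x) : e * e = 1 := by
  ext x
  simp only [Equiv.Perm.mul_apply, Equiv.Perm.one_apply, he]
  exact sAff_invol c _ (D.aSimple_fst_ne_zero j) x

lemma floor_cast_pair {A a : V × ℤ} (hA : A.1 ∈ D.R0) (ha : a.1 ∈ D.R0) :
    ((⌊⟪A.1, coroot a.1⟫⌋ : ℤ) : ℝ) = ⟪A.1, coroot a.1⟫ := by
  obtain ⟨k, hk⟩ := D.crystallographic a.1 ha A.1 hA
  rw [hk, Int.floor_intCast]

lemma phiA_invol {A a : V × ℤ} (hA : A.1 ≠ 0) (ha : a.1 ≠ 0)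
    (hk : ((⌊⟪A.1, coroot a.1⟫⌋ : ℤ) : ℝ) = ⟪A.1, coroot a.1⟫) :
    phiA A (phiA A a) = a := by
  have hfst : (phiA A a).1 = a.1 - ⟪a.1, coroot A.1⟫ • A.1 := rfl
  have hip : ⟪(phiA A a).1, coroot A.1⟫ = - ⟪a.1, coroot A.1⟫ := by
    rw [hfst, inner_sub_left, real_inner_smul_left, inner_self_coroot hA]
    ring
  have hco : ⟪A.1, coroot (phiA A a).1⟫ = - ⟪A.1, coroot a.1⟫ := by
    rw [hfst, coroot_reflect A.1 a.1 hA ha, inner_sub_right, real_inner_smul_right,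
      inner_self_coroot hA]
    ring
  have hfl : ⌊⟪A.1, coroot (phiA A a).1⟫⌋ = - ⌊⟪A.1, coroot a.1⟫⌋ := by
    rw [hco, show (-⟪A.1, coroot a.1⟫ : ℝ) = ((-⌊⟪A.1, coroot a.1⟫⌋ : ℤ) : ℝ) by
      push_cast; rw [hk]]
    exact Int.floor_intCast _
  apply Prod.ext
  · show (phiA A a).1 - ⟪(phiA A a).1, coroot A.1⟫ • A.1 = a.1
    rw [hip, hfst, neg_smul]
    abel
  · show (phiA A a).2 - A.2 * ⌊⟪A.1, coroot (phiA A a).1⟫⌋ = a.2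
    rw [hfl]
    show a.2 - A.2 * ⌊⟪A.1, coroot a.1⟫⌋ - A.2 * -⌊⟪A.1, coroot a.1⟫⌋ = a.2
    ring

lemma RW_mul_reflect {c : ℝ} {w e : Equiv.Perm V} {j : Fin (D.n + 1)}
    (he : ∀ x, e x = sAff c (D.aSimple j) x) :
    D.RW c (w * e) ⊆ insert (D.aSimple j) (phiA (D.aSimple j) '' D.RW c w) := by
  rintro a ⟨hapos, b, hbneg, hmap⟩
  by_cases haj : a = D.aSimple j
  · rw [haj]; exact Set.mem_insert _ _
  · have hmem : phiA (D.aSimple j) a ∈ D.RW c w := by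
      refine ⟨D.affPos_phiA j hapos haj, b, hbneg, ?_⟩
      intro x
      rw [aval_phiA c _ _ (D.aSimple_fst_ne_zero j) (D.root_ne_zero hapos.1)
        (D.floor_cast_pair (D.aSimple_affRoot j) hapos.1)]
      rw [← D.refl_inv_eq he]
      have : e⁻¹ (w⁻¹ x) = (w * e)⁻¹ x := by
        rw [mul_inv_rev, Equiv.Perm.mul_apply]
      rw [this]
      exact hmap x
    refine Set.mem_insert_of_mem _ ⟨phiA (D.aSimple j) a, hmem, ?_⟩
    exact phiA_invol (D.aSimple_fst_ne_zero j) (D.root_ne_zero hapos.1)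
      (D.floor_cast_pair (D.aSimple_affRoot j) hapos.1)

lemma RW_finite_mul {c : ℝ} {w e : Equiv.Perm V} {j : Fin (D.n + 1)}
    (he : ∀ x, e x = sAff c (D.aSimple j) x) (hfin : (D.RW c w).Finite) :
    (D.RW c (w * e)).Finite ∧ D.len c (w * e) ≤ D.len c w + 1 := by
  have hsub := D.RW_mul_reflect (w := w) he
  have hfin2 : (D.RW c (w * e)).Finite :=
    Set.Finite.subset ((hfin.image _).insert _) hsub
  refine ⟨hfin2, ?_⟩
  calc D.len c (w * e) = (D.RW c (w * e)).ncard := rfl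
    _ ≤ (insert (D.aSimple j) (phiA (D.aSimple j) '' D.RW c w)).ncard :=
        Set.ncard_le_ncard hsub ((hfin.image _).insert _)
    _ ≤ (phiA (D.aSimple j) '' D.RW c w).ncard + 1 := Set.ncard_insert_le _ _
    _ ≤ (D.RW c w).ncard + 1 := by
        have := Set.ncard_image_le (f := phiA (D.aSimple j)) hfin
        omega

lemma RW_finite_unmul {c : ℝ} {w e : Equiv.Perm V} {j : Fin (D.n + 1)}
    (he : ∀ x, e x = sAff c (D.aSimple j) x) (hfin : (D.RW c (w * e)).Finite) :
    (D.RW c w).Finite := by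
  have hw : w = (w * e) * e := by
    rw [mul_assoc, D.refl_mul_self he, mul_one]
  rw [hw]
  exact (D.RW_finite_mul he hfin).1

/-- Chain bound: `ℓ(u ∘ s_{b₁} ⋯ s_{b_k}) ≤ k` when `ℓ(u) = 0`. -/
lemma len_word_le {c : ℝ} (u : Equiv.Perm V)
    (hufin : (D.RW c u).Finite) (hu0 : D.len c u = 0) :
    ∀ (m : List (Fin (D.n + 1) × Equiv.Perm V)),
      (∀ p ∈ m, ∀ x, p.2 x = sAff c (D.aSimple p.1) x) →
      (D.RW c (u * (m.map Prod.snd).prod)).Finite ∧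
        D.len c (u * (m.map Prod.snd).prod) ≤ m.length := by
  intro m
  induction m using List.reverseRecOn with
  | nil =>
    intro _
    simp only [List.map_nil, List.prod_nil, mul_one, List.length_nil]
    exact ⟨hufin, by omega⟩
  | append_singleton m p ih =>
    intro hm
    have hm' : ∀ q ∈ m, ∀ x, q.2 x = sAff c (D.aSimple q.1) x := fun q hq =>
      hm q (by simp [hq])
    have hp : ∀ x, p.2 x = sAff c (D.aSimple p.1) x := hm p (by simp)
    obtain ⟨hfin, hlen⟩ := ih hm'
    have heq : u * ((m ++ [p]).map Prod.snd).prod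
        = (u * (m.map Prod.snd).prod) * p.2 := by
      rw [List.map_append, List.prod_append]
      simp [mul_assoc]
    rw [heq]
    obtain ⟨h1, h2⟩ := D.RW_finite_mul hp hfin
    refine ⟨h1, ?_⟩
    simp only [List.length_append, List.length_cons, List.length_nil]
    omega

/-- Finiteness propagates backwards along a word. -/
lemma RW_finite_of_word {c : ℝ} (u : Equiv.Perm V) :
    ∀ (m : List (Fin (D.n + 1) × Equiv.Perm V)),
      (∀ p ∈ m, ∀ x, p.2 x = sAff c (D.aSimple p.1) x) →
      (D.RW c (u * (m.map Prod.snd).prod)).Finite → (D.RW c u).Finite := by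
  intro m
  induction m using List.reverseRecOn with
  | nil => intro _ h; simpa using h
  | append_singleton m p ih =>
    intro hm hfin
    have hm' : ∀ q ∈ m, ∀ x, q.2 x = sAff c (D.aSimple q.1) x := fun q hq =>
      hm q (by simp [hq])
    have hp : ∀ x, p.2 x = sAff c (D.aSimple p.1) x := hm p (by simp)
    have heq : u * ((m ++ [p]).map Prod.snd).prod
        = (u * (m.map Prod.snd).prod) * p.2 := by
      rw [List.map_append, List.prod_append]
      simp [mul_assoc]
    rw [heq] at hfin
    exact ih hm' (D.RW_finite_unmul hp hfin)

end RootSystemData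
namespace RootSystemData

variable {V : Type*} [NormedAddCommGroup V] [InnerProductSpace ℝ V]
variable (D : RootSystemData V)

/-- The composite of difference-reflection operators along a word. -/
def TTl (c : ℝ) (τ : V × ℤ → ℂ) (l : List (Fin (D.n + 1) × Equiv.Perm V)) :
    (V → ℂ) → V → ℂ :=
  (l.map fun p => hatT c τ (D.aSimple p.1)).foldr (· ∘ ·) id

lemma TTl_nil (c : ℝ) (τ : V × ℤ → ℂ) (f : V → ℂ) : D.TTl c τ [] f = f := rfl

lemma TTl_cons (c : ℝ) (τ : V × ℤ → ℂ) (p : Fin (D.n + 1) × Equiv.Perm V)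
    (l : List (Fin (D.n + 1) × Equiv.Perm V)) (f : V → ℂ) (x : V) :
    D.TTl c τ (p :: l) f x = hatT c τ (D.aSimple p.1) (D.TTl c τ l f) x := rfl

lemma prod_cons_inv_apply {c : ℝ} {p : Fin (D.n + 1) × Equiv.Perm V}
    (hp : ∀ x, p.2 x = sAff c (D.aSimple p.1) x)
    (m : List (Fin (D.n + 1) × Equiv.Perm V)) (x : V) :
    (((p :: m).map Prod.snd).prod)⁻¹ x = ((m.map Prod.snd).prod)⁻¹ (p.2 x) := by
  rw [List.map_cons, List.prod_cons, mul_inv_rev, Equiv.Perm.mul_apply]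
  congr 1
  rw [D.refl_inv_eq hp, ← hp]

lemma TTl_eq_zero (c : ℝ) (τ : V × ℤ → ℂ) :
    ∀ (l : List (Fin (D.n + 1) × Equiv.Perm V))
      (_ : ∀ p ∈ l, ∀ x, p.2 x = sAff c (D.aSimple p.1) x) (f : V → ℂ) (x : V),
      (∀ m : List (Fin (D.n + 1) × Equiv.Perm V), m.Sublist l → f (((m.map Prod.snd).prod)⁻¹ x) = 0) →
      D.TTl c τ l f x = 0 := by
  intro l
  induction l with
  | nil =>
    intro _ f x h
    have := h [] (List.nil_sublist _)
    simpa [TTl_nil] using this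
  | cons p l ih =>
    intro hl f x h
    have hp : ∀ y, p.2 y = sAff c (D.aSimple p.1) y := hl p (by simp)
    have hl' : ∀ q ∈ l, ∀ y, q.2 y = sAff c (D.aSimple q.1) y := fun q hq =>
      hl q (by simp [hq])
    have h1 : D.TTl c τ l f (p.2 x) = 0 := by
      apply ih hl'
      intro m hm
      rw [← D.prod_cons_inv_apply hp]
      exact h (p :: m) (hm.cons₂ p)
    have h2 : D.TTl c τ l f x = 0 := by
      apply ih hl'
      intro m hm
      exact h m (hm.cons p)
    rw [TTl_cons, hatT, ← hp x]
    split_ifs <;> simp [h1, h2]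

lemma TTl_full_coeff (c : ℝ) (τ : V × ℤ → ℂ)
    (hτ0 : ∀ j : Fin (D.n + 1), τ (D.aSimple j) ≠ 0) :
    ∀ (l : List (Fin (D.n + 1) × Equiv.Perm V))
      (_ : ∀ p ∈ l, ∀ x, p.2 x = sAff c (D.aSimple p.1) x) (f : V → ℂ) (x : V),
      (∀ m : List (Fin (D.n + 1) × Equiv.Perm V), m.Sublist l → m ≠ l → f (((m.map Prod.snd).prod)⁻¹ x) = 0) →
      ∃ cf : ℂ, cf ≠ 0 ∧ D.TTl c τ l f x = cf * f (((l.map Prod.snd).prod)⁻¹ x) := by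
  intro l
  induction l with
  | nil =>
    intro _ f x _
    refine ⟨1, one_ne_zero, ?_⟩
    simp [TTl]
  | cons p l ih =>
    intro hl f x h
    have hp : ∀ y, p.2 y = sAff c (D.aSimple p.1) y := hl p (by simp)
    have hl' : ∀ q ∈ l, ∀ y, q.2 y = sAff c (D.aSimple q.1) y := fun q hq =>
      hl q (by simp [hq])
    -- the "reflected branch" satisfies the induction hypothesis at p.2 x
    have hrefl : ∀ m, m.Sublist l → m ≠ l →
        f (((m.map Prod.snd).prod)⁻¹ (p.2 x)) = 0 := by
      intro m hm hmne
      rw [← D.prod_cons_inv_apply hp]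
      exact h (p :: m) (hm.cons₂ p) (by simpa using hmne)
    obtain ⟨cf, hcf, hval⟩ := ih hl' f (p.2 x) hrefl
    have hpoint : ((l.map Prod.snd).prod)⁻¹ (p.2 x)
        = (((p :: l).map Prod.snd).prod)⁻¹ x := (D.prod_cons_inv_apply hp l x).symm
    rw [hpoint] at hval
    have hA := hτ0 p.1
    rw [TTl_cons, hatT, ← hp x]
    by_cases hgt : 0 < aval c (D.aSimple p.1) x
    · rw [if_pos hgt, hval]
      exact ⟨τ (D.aSimple p.1) * cf, mul_ne_zero hA hcf, by ring⟩
    · rw [if_neg hgt]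
      by_cases heq : aval c (D.aSimple p.1) x = 0
      · rw [if_pos heq]
        -- here p.2 x = x
        have hfix : p.2 x = x := by
          rw [hp, sAff, heq, zero_smul, sub_zero]
        rw [hfix] at hval
        rw [hval]
        exact ⟨τ (D.aSimple p.1) * cf, mul_ne_zero hA hcf, by ring⟩
      · rw [if_neg heq]
        -- stay branch vanishes
        have hstay : D.TTl c τ l f x = 0 := by
          apply D.TTl_eq_zero c τ l hl'
          intro m hm
          refine h m (hm.cons p) (fun hEq => ?_)
          have hlen := hm.length_le
          rw [hEq] at hlen
          simp at hlen
        rw [hval, hstay]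
        exact ⟨(τ (D.aSimple p.1))⁻¹ * cf,
          mul_ne_zero (inv_ne_zero hA) hcf, by ring⟩

end RootSystemData
section AffinePerm

variable {V : Type*} [NormedAddCommGroup V] [InnerProductSpace ℝ V]

/-- A permutation of `V` given by an invertible affine map. -/
def IsAffinePerm (g : Equiv.Perm V) : Prop :=
  ∃ L : V →ₗ[ℝ] V, Function.Bijective L ∧ ∀ x, g x = L x + g 0

lemma isAffinePerm_one : IsAffinePerm (1 : Equiv.Perm V) :=
  ⟨LinearMap.id, Function.bijective_id, by simp⟩

lemma isAffinePerm_mul {g h : Equiv.Perm V} (hg : IsAffinePerm g)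
    (hh : IsAffinePerm h) : IsAffinePerm (g * h) := by
  obtain ⟨Lg, hLg, hgx⟩ := hg
  obtain ⟨Lh, hLh, hhx⟩ := hh
  refine ⟨Lg.comp Lh, hLg.comp hLh, fun x => ?_⟩
  simp only [Equiv.Perm.mul_apply, LinearMap.comp_apply]
  rw [hgx (h x), hhx x, map_add, hgx (h 0)]
  abel

lemma isAffinePerm_inv {g : Equiv.Perm V} (hg : IsAffinePerm g) :
    IsAffinePerm g⁻¹ := by
  obtain ⟨L, hL, hgx⟩ := hg
  set Le := LinearEquiv.ofBijective L hL with hLe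
  have h1 : ∀ y : V, L (Le.symm y) = y := fun y => Le.apply_symm_apply y
  have key : ∀ y, g⁻¹ y = Le.symm y - Le.symm (g 0) := by
    intro y
    apply g.injective
    rw [show g (g⁻¹ y) = y from g.apply_symm_apply y, hgx, map_sub, h1, h1]
    abel
  refine ⟨Le.symm.toLinearMap, Le.symm.bijective, fun x => ?_⟩
  rw [key x, key 0]
  simp only [map_zero, zero_sub, LinearEquiv.coe_coe]
  abel

lemma isAffinePerm_sAff {c : ℝ} {a : V × ℤ} (ha : a.1 ≠ 0) {e : Equiv.Perm V}
    (he : ∀ x, e x = sAff c a x) : IsAffinePerm e := by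
  set L : V →ₗ[ℝ] V :=
    { toFun := fun x => x - ⟪x, coroot a.1⟫ • a.1
      map_add' := by
        intro x y
        show (x + y) - ⟪x + y, coroot a.1⟫ • a.1
            = (x - ⟪x, coroot a.1⟫ • a.1) + (y - ⟪y, coroot a.1⟫ • a.1)
        rw [inner_add_left, add_smul]
        abel
      map_smul' := by
        intro t x
        show (t • x) - ⟪t • x, coroot a.1⟫ • a.1 = t • (x - ⟪x, coroot a.1⟫ • a.1)
        rw [real_inner_smul_left, smul_sub, smul_smul]
      } with hLdef
  have hinv : ∀ x, L (L x) = x := by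
    intro x
    show (x - ⟪x, _⟫ • _) - ⟪x - ⟪x, _⟫ • _, _⟫ • _ = x
    rw [inner_sub_left, real_inner_smul_left, inner_self_coroot ha]
    have : ⟪x, coroot a.1⟫ - ⟪x, coroot a.1⟫ * 2 = - ⟪x, coroot a.1⟫ := by ring
    rw [this, neg_smul]
    abel
  refine ⟨L, Function.Involutive.bijective hinv, fun x => ?_⟩
  have h0 : e 0 = - (a.2 * c) • a.1 := by
    rw [he, sAff, aval]
    simp
  rw [he, sAff, aval, h0]
  show x - (⟪x, coroot a.1⟫ + a.2 * c) • a.1 = (x - ⟪x, coroot a.1⟫ • a.1) + _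
  rw [add_smul, neg_smul]
  abel

lemma isAffinePerm_prod : ∀ (L : List (Equiv.Perm V)),
    (∀ g ∈ L, IsAffinePerm g) → IsAffinePerm L.prod := by
  intro L
  induction L with
  | nil => intro _; simpa using isAffinePerm_one
  | cons g L ih =>
    intro h
    rw [List.prod_cons]
    exact isAffinePerm_mul (h g (by simp)) (ih fun q hq => h q (by simp [hq]))

end AffinePerm

namespace RootSystemData

variable {V : Type*} [NormedAddCommGroup V] [InnerProductSpace ℝ V]
variable (D : RootSystemData V)

lemma isAffinePerm_of_Wext {c : ℝ} {g : Equiv.Perm V} (hg : g ∈ D.Wext c) :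
    IsAffinePerm g := by
  induction hg using Subgroup.closure_induction with
  | mem g hgen =>
    rcases hgen with ⟨a, ha, hfa⟩ | ⟨lam, _, hfa⟩
    · exact isAffinePerm_sAff (D.root_ne_zero ha) hfa
    · refine ⟨LinearMap.id, Function.bijective_id, fun x => ?_⟩
      rw [hfa x, hfa 0]
      simp
  | one => exact isAffinePerm_one
  | mul g h _ _ hg hh => exact isAffinePerm_mul hg hh
  | inv g _ hg => exact isAffinePerm_inv hg

end RootSystemData
namespace RootSystemData

variable {V : Type*} [NormedAddCommGroup V] [InnerProductSpace ℝ V]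
variable (D : RootSystemData V)

lemma closure_le_weightLattice :
    ∀ x ∈ AddSubgroup.closure (D.R0 : Set V), x ∈ D.weightLattice := by
  intro x hx
  induction hx using AddSubgroup.closure_induction with
  | mem β hβ =>
    intro α hα
    exact D.crystallographic α hα β hβ
  | zero =>
    intro α hα
    exact ⟨0, by simp⟩
  | add x y _ _ hx hy =>
    intro α hα
    obtain ⟨k, hk⟩ := hx α hα
    obtain ⟨k', hk'⟩ := hy α hα
    exact ⟨k + k', by rw [inner_add_left, hk, hk']; push_cast; ring⟩
  | neg x _ hx =>
    intro α hα
    obtain ⟨k, hk⟩ := hx α hα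
    exact ⟨-k, by rw [inner_neg_left, hk]; push_cast; ring⟩

lemma exists_closure_not_mem {U : Submodule ℝ V} (hU : U ≠ ⊤) :
    ∃ v ∈ AddSubgroup.closure (D.R0 : Set V), v ∉ U := by
  by_contra h
  push_neg at h
  apply hU
  rw [eq_top_iff, ← D.span_top, Submodule.span_le]
  intro β hβ
  exact h β (AddSubgroup.subset_closure hβ)

lemma exists_lattice_avoiding (LL : List (Equiv.Perm V))
    (hL : ∀ σ ∈ LL, IsAffinePerm σ) :
    ∃ lam, lam ∈ AddSubgroup.closure (D.R0 : Set V) ∧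
      ∀ σ ∈ LL, σ ≠ 1 → σ lam ≠ lam := by
  have _i : NoZeroSMulDivisors ℤ V := by
    haveI := IsAddTorsionFree.of_isTorsionFree ℝ V; infer_instance
  induction LL with
  | nil => exact ⟨0, AddSubgroup.zero_mem _, by simp⟩
  | cons σ L ih =>
    obtain ⟨lam, hlam, hfix⟩ := ih (fun τ hτ => hL τ (by simp [hτ]))
    by_cases hσ1 : σ = 1
    · refine ⟨lam, hlam, ?_⟩
      intro τ hτ hτ1
      rcases List.mem_cons.1 hτ with h | h
      · exact absurd (h.trans hσ1) hτ1
      · exact hfix τ h hτ1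
    obtain ⟨Lσ, hbijσ, hformσ⟩ := hL σ (by simp)
    by_cases hall : ∀ v ∈ AddSubgroup.closure (D.R0 : Set V), Lσ v = v
    · -- σ is a nonzero translation
      have hid : ∀ x : V, Lσ x = x := by
        have hle : (⊤ : Submodule ℝ V) ≤ LinearMap.eqLocus Lσ LinearMap.id := by
          rw [← D.span_top]
          rw [Submodule.span_le]
          intro β hβ
          exact hall β (AddSubgroup.subset_closure hβ)
        intro x
        exact hle (Submodule.mem_top : x ∈ ⊤)
      have hσ0 : σ 0 ≠ 0 := by
        intro h0
        apply hσ1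
        ext x
        rw [hformσ x, hid x, h0, add_zero, Equiv.Perm.one_apply]
      refine ⟨lam, hlam, ?_⟩
      intro τ hτ hτ1
      rcases List.mem_cons.1 hτ with h | h
      · rw [h, hformσ lam, hid lam]
        intro hEq
        exact hσ0 (by rwa [add_eq_left] at hEq)
      · exact hfix τ h hτ1
    · push_neg at hall
      obtain ⟨v, hvΛ, hvne⟩ := hall
      -- the set of bad shifts along v is finite
      set Sτ : Equiv.Perm V → Set ℤ :=
        fun τ => {k : ℤ | τ ≠ 1 ∧ τ (lam + k • v) = lam + k • v} with hSτ
      have hSfin : ∀ τ ∈ σ :: L, (Sτ τ).Finite := by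
        intro τ hτ
        by_cases hτ1 : τ = 1
        · apply Set.Finite.subset Set.finite_empty
          intro k hk
          exact absurd hτ1 hk.1
        obtain ⟨Lτ, hbijτ, hformτ⟩ := hL τ hτ
        have hLτ : ∀ x, Lτ x = τ x - τ 0 := by
          intro x
          rw [hformτ x]
          abel
        have hdisj : Lτ v ≠ v ∨ τ lam ≠ lam := by
          rcases List.mem_cons.1 hτ with h | h
          · left
            rw [hLτ v, h]
            intro hEq
            apply hvne
            have : Lσ v = σ v - σ 0 := by rw [hformσ v]; abel
            rw [this, hEq]
          · right
            exact hfix τ h hτ1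
        by_cases hLv : Lτ v = v
        · -- the bad set is empty
          have hτlam : τ lam ≠ lam := by
            rcases hdisj with hd | hd
            · exact absurd hLv hd
            · exact hd
          apply Set.Finite.subset Set.finite_empty
          intro k hk
          exfalso
          have e1 := hk.2
          rw [hformτ, map_add, map_zsmul, hLv] at e1
          apply hτlam
          rw [hformτ lam]
          have : Lτ lam + τ 0 = lam := by
            have h3 : (Lτ lam + k • v + τ 0) - (k • v) = (lam + k • v) - (k • v) := by
              rw [← e1]
            calc Lτ lam + τ 0 = (Lτ lam + k • v + τ 0) - (k • v) := by abel
              _ = (lam + k • v) - (k • v) := h3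
              _ = lam := by abel
          exact this
        · -- the bad set is a subsingleton
          apply Set.Subsingleton.finite
          intro k hk k' hk'
          have e1 := hk.2
          have e2 := hk'.2
          rw [hformτ, map_add, map_zsmul] at e1 e2
          have hsub : (k - k') • (Lτ v - v) = 0 := by
            calc (k - k') • (Lτ v - v)
                = ((Lτ lam + k • Lτ v + τ 0) - (Lτ lam + k' • Lτ v + τ 0))
                  - ((lam + k • v) - (lam + k' • v)) := by
                  rw [sub_smul, smul_sub, smul_sub]
                  abel
              _ = 0 := by rw [e1, e2]; abel
          rcases smul_eq_zero.1 hsub with h0 | h0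
          · omega
          · exact absurd (by rw [← sub_eq_zero]; exact h0) hLv
      -- choose a good shift
      have hbadfin : (⋃ τ ∈ {τ | τ ∈ σ :: L}, Sτ τ).Finite :=
        Set.Finite.biUnion ((σ :: L).finite_toSet) (fun τ hτ => hSfin τ hτ)
      obtain ⟨k, hk⟩ := (hbadfin.infinite_compl).nonempty
      refine ⟨lam + k • v,
        AddSubgroup.add_mem _ hlam (AddSubgroup.zsmul_mem _ hvΛ k), ?_⟩
      intro τ hτ hτ1 hEq
      exact hk (Set.mem_biUnion hτ ⟨hτ1, hEq⟩)

end RootSystemData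
namespace RootSystemData

variable {V : Type*} [NormedAddCommGroup V] [InnerProductSpace ℝ V]
variable (D : RootSystemData V)

lemma main_aux (c : ℝ) (τ : V × ℤ → ℂ)
    (hτ0 : ∀ j : Fin (D.n + 1), τ (D.aSimple j) ≠ 0)
    (coef : Equiv.Perm V → ℂ) (TW : Equiv.Perm V → (V → ℂ) → V → ℂ) :
    ∀ (N : ℕ) (S' : Finset (Equiv.Perm V)), S'.card ≤ N →
      (∀ w ∈ S', ∃ u : Equiv.Perm V, u ∈ D.Wext c ∧ D.len c u = 0 ∧
        ∃ l : List (Fin (D.n + 1) × Equiv.Perm V),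
          (∀ p ∈ l, ∀ x : V, p.2 x = sAff c (D.aSimple p.1) x) ∧
          w = u * (l.map Prod.snd).prod ∧
          l.length = D.len c w ∧
          TW w = (fun (f : V → ℂ) (x : V) => f (u⁻¹ x)) ∘
            (l.map fun p => hatT c τ (D.aSimple p.1)).foldr (· ∘ ·) id) →
      (∀ f : V → ℂ, ∀ lam ∈ D.weightLattice,
        ∑ w ∈ S', coef w * TW w f lam = 0) →
      ∀ w ∈ S', coef w = 0 := by
  intro N
  induction N with
  | zero =>
    intro S' hcard _ _ w hw
    rw [Finset.card_eq_zero.1 (Nat.le_zero.1 hcard)] at hw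
    simp at hw
  | succ N ih =>
    intro S' hcard hTW' hann' w hwS
    rcases Finset.eq_empty_or_nonempty S' with hE | hne
    · rw [hE] at hwS; simp at hwS
    obtain ⟨w₀, hw₀S, hmax⟩ := Finset.exists_max_image S' (D.len c) hne
    choose u hu hu0 l hl hweq hlen hTWl using hTW'
    -- the key coefficient vanishing for the maximal element
    have hw0coef : coef w₀ = 0 := by
      -- bad permutations
      set LL : List (Equiv.Perm V) :=
        S'.toList.attach.flatMap (fun q =>
          ((l q.1 (Finset.mem_toList.1 q.2)).sublists.map
            (fun m => u q.1 (Finset.mem_toList.1 q.2)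
              * ((m.map Prod.snd).prod) * w₀⁻¹))) with hLLdef
      have hLLmem : ∀ (v : Equiv.Perm V) (hv : v ∈ S')
          (m : List (Fin (D.n + 1) × Equiv.Perm V)), m.Sublist (l v hv) →
          u v hv * (m.map Prod.snd).prod * w₀⁻¹ ∈ LL := by
        intro v hv m hm
        rw [hLLdef]
        rw [List.mem_flatMap]
        refine ⟨⟨v, Finset.mem_toList.2 hv⟩, List.mem_attach _ _, ?_⟩
        rw [List.mem_map]
        exact ⟨m, List.mem_sublists.2 hm, rfl⟩
      have haffprod : ∀ (v : Equiv.Perm V) (hv : v ∈ S')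
          (m : List (Fin (D.n + 1) × Equiv.Perm V)), m.Sublist (l v hv) →
          IsAffinePerm (u v hv * (m.map Prod.snd).prod) := by
        intro v hv m hm
        apply isAffinePerm_mul (D.isAffinePerm_of_Wext (hu v hv))
        apply isAffinePerm_prod
        intro g hg
        rw [List.mem_map] at hg
        obtain ⟨p, hp, hpg⟩ := hg
        rw [← hpg]
        exact isAffinePerm_sAff (D.aSimple_fst_ne_zero p.1)
          (hl v hv p (hm.subset hp) )
      have hLLaff : ∀ σ ∈ LL, IsAffinePerm σ := by
        intro σ hσ
        rw [hLLdef, List.mem_flatMap] at hσ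
        obtain ⟨⟨v, hvT⟩, _, hσ2⟩ := hσ
        rw [List.mem_map] at hσ2
        obtain ⟨m, hm, hσ3⟩ := hσ2
        rw [← hσ3]
        apply isAffinePerm_mul
          (haffprod v (Finset.mem_toList.1 hvT) m (List.mem_sublists.1 hm))
        apply isAffinePerm_inv
        rw [hweq w₀ hw₀S]
        exact haffprod w₀ hw₀S (l w₀ hw₀S) (List.Sublist.refl _)
      obtain ⟨lam, hlamΛ, hlamfix⟩ := D.exists_lattice_avoiding LL hLLaff
      have hlamP : lam ∈ D.weightLattice := D.closure_le_weightLattice lam hlamΛ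
      -- the word-length rigidity
      have hCCL : ∀ (v : Equiv.Perm V) (hv : v ∈ S')
          (m : List (Fin (D.n + 1) × Equiv.Perm V)), m.Sublist (l v hv) →
          u v hv * (m.map Prod.snd).prod = w₀ → v = w₀ ∧ m = l v hv := by
        intro v hv m hm hπ
        by_cases hml : m = l v hv
        · rw [hml] at hπ
          rw [← hweq v hv] at hπ
          exact ⟨hπ, hml⟩
        · exfalso
          have hlt : m.length < (l v hv).length := by
            rcases lt_or_eq_of_le hm.length_le with h | h
            · exact h
            · exact absurd (hm.eq_of_length h) hml
          by_cases hfin : (D.RW c v).Finite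
          · have hfinu : (D.RW c (u v hv)).Finite := by
              apply D.RW_finite_of_word (u v hv) (l v hv) (hl v hv)
              rw [← hweq v hv]
              exact hfin
            have hbound := (D.len_word_le (u v hv) hfinu (hu0 v hv) m
              (fun p hp => hl v hv p (hm.subset hp))).2
            rw [hπ] at hbound
            have h1 := hlen v hv
            have h2 := hmax v hv
            omega
          · have hzero : D.len c v = 0 := Set.Infinite.ncard hfin
            have h1 := hlen v hv
            rw [hzero] at h1
            have : l v hv = [] := List.length_eq_zero_iff.1 h1
            rw [this] at hm hml
            rw [List.sublist_nil.1 hm] at hml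
            exact hml rfl
      -- test function
      set f : V → ℂ := fun y => if y = w₀⁻¹ lam then (1:ℂ) else 0 with hfdef
      have hpt : ∀ (v : Equiv.Perm V) (hv : v ∈ S')
          (m : List (Fin (D.n + 1) × Equiv.Perm V)), m.Sublist (l v hv) →
          u v hv * (m.map Prod.snd).prod ≠ w₀ →
          f (((m.map Prod.snd).prod)⁻¹ ((u v hv)⁻¹ lam)) = 0 := by
        intro v hv m hm hne2
        set π := u v hv * (m.map Prod.snd).prod with hπdef
        have hσLL := hLLmem v hv m hm
        have hσ1 : π * w₀⁻¹ ≠ 1 := by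
          intro hEq
          exact hne2 (by rwa [mul_inv_eq_one] at hEq)
        have hfix := hlamfix _ hσLL hσ1
        have hptne : ((m.map Prod.snd).prod)⁻¹ ((u v hv)⁻¹ lam) ≠ w₀⁻¹ lam := by
          intro hEq
          apply hfix
          have h3 : π⁻¹ lam = w₀⁻¹ lam := by
            rw [hπdef, mul_inv_rev, Equiv.Perm.mul_apply]
            exact hEq
          show (π * w₀⁻¹) lam = lam
          rw [Equiv.Perm.mul_apply, ← h3]
          simp
        rw [hfdef]
        simp only [hptne, if_false]
      have hTWeval : ∀ (v : Equiv.Perm V) (hv : v ∈ S'),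
          TW v f lam = D.TTl c τ (l v hv) f ((u v hv)⁻¹ lam) := by
        intro v hv
        rw [hTWl v hv]
        rfl
      -- all non-maximal terms vanish
      have hvanish : ∀ (v : Equiv.Perm V) (hv : v ∈ S'), v ≠ w₀ →
          TW v f lam = 0 := by
        intro v hv hvne
        rw [hTWeval v hv]
        apply D.TTl_eq_zero c τ (l v hv) (hl v hv)
        intro m hm
        apply hpt v hv m hm
        intro hπ
        exact hvne (hCCL v hv m hm hπ).1
      -- the maximal term reduces to a nonzero multiple of the coefficient
      obtain ⟨cf, hcf0, hcfval⟩ :=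
        D.TTl_full_coeff c τ hτ0 (l w₀ hw₀S) (hl w₀ hw₀S) f ((u w₀ hw₀S)⁻¹ lam)
          (by
            intro m hm hmne
            apply hpt w₀ hw₀S m hm
            intro hπ
            exact hmne ((hCCL w₀ hw₀S m hm hπ).2))
      have hW0val : TW w₀ f lam = cf := by
        rw [hTWeval w₀ hw₀S, hcfval]
        have h4 : (((l w₀ hw₀S).map Prod.snd).prod)⁻¹ ((u w₀ hw₀S)⁻¹ lam)
            = w₀⁻¹ lam := by
          have h5 : w₀⁻¹ = (u w₀ hw₀S * ((l w₀ hw₀S).map Prod.snd).prod)⁻¹ :=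
            congrArg Inv.inv (hweq w₀ hw₀S)
          rw [h5, mul_inv_rev, Equiv.Perm.mul_apply]
        rw [h4, hfdef]
        simp
      have hsum := hann' f lam hlamP
      rw [Finset.sum_eq_single_of_mem w₀ hw₀S
        (fun v hv hvne => by rw [hvanish v hv hvne, mul_zero])] at hsum
      rw [hW0val] at hsum
      exact (mul_eq_zero.1 hsum).resolve_right hcf0
    -- induction on the remaining terms
    by_cases hww0 : w = w₀
    · rw [hww0]; exact hw0coef
    · apply ih (S'.erase w₀) ?_ ?_ ?_ w (Finset.mem_erase.2 ⟨hww0, hwS⟩)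
      · have := Finset.card_erase_of_mem hw₀S
        omega
      · intro v hv
        exact ⟨u v (Finset.mem_of_mem_erase hv), hu _ _, hu0 _ _,
          l v (Finset.mem_of_mem_erase hv), hl _ _, hweq _ _, hlen _ _, hTWl _ _⟩
      · intro f lam hlam
        rw [Finset.sum_erase_eq_sub hw₀S]
        rw [hann' f lam hlam, hw0coef]
        simp

end RootSystemData
open RootSystemData in
/-- for integral `c` larger than the Coxeter number `h(R₀) = ⟨ρ,ϑ∨⟩ + 1`,
the difference-reflection representation of the extended affine Hecke algebra on
functions over the weight lattice is faithful: the operators `T̂_w = T̂_u ∘ T̂_{j₁} ∘ ⋯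
∘ T̂_{jℓ}` (built from reduced expressions `w = u s_{j₁} ⋯ s_{jℓ}`, `u ∈ Ω`,
`ℓ = ℓ(w)`) are linearly independent. -/
theorem statement1 {V : Type*} [NormedAddCommGroup V] [InnerProductSpace ℝ V]
    (D : RootSystemData V) (cz : ℤ)
    (hc : ⟪D.rhoHalf, coroot D.hshort⟫ + 1 < (cz : ℝ))
    (τ : V × ℤ → ℂ) (hτ : D.IsMultiplicity (cz : ℝ) τ)
    (S : Finset (Equiv.Perm V)) (hS : ∀ w ∈ S, w ∈ D.Wext (cz : ℝ))
    (coef : Equiv.Perm V → ℂ)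
    (TW : Equiv.Perm V → (V → ℂ) → V → ℂ)
    (hTW : ∀ w ∈ S, ∃ u : Equiv.Perm V, u ∈ D.Wext (cz : ℝ) ∧ D.len (cz : ℝ) u = 0 ∧
      ∃ l : List (Fin (D.n + 1) × Equiv.Perm V),
        (∀ p ∈ l, ∀ x : V, p.2 x = sAff (cz : ℝ) (D.aSimple p.1) x) ∧
        w = u * (l.map Prod.snd).prod ∧
        l.length = D.len (cz : ℝ) w ∧
        TW w = (fun (f : V → ℂ) (x : V) => f (u⁻¹ x)) ∘
          (l.map fun p => hatT (cz : ℝ) τ (D.aSimple p.1)).foldr (· ∘ ·) id)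
    (hann : ∀ f : V → ℂ, ∀ lam ∈ D.weightLattice,
      ∑ w ∈ S, coef w * TW w f lam = 0) :
    ∀ w ∈ S, coef w = 0 := by
  intro w hw
  exact D.main_aux (cz : ℝ) τ (fun j => hτ.1 (D.aSimple j) (D.aSimple_affRoot j))
    coef TW S.card S le_rfl hTW hann w hw
end
end

section
/- Let a = α∨ + rc and b = β∨ + lc be affine roots (α, β ∈ R₀, r, l ∈ ℤ) with ⟨α,β∨⟩ = 0. Then the integral-reflection operators commute: I_a ∘ I_b = I_b ∘ I_a as operators on functions P → ℂ. -/
open scoped RealInnerProductSpace BigOperators Classical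

noncomputable section

section AuxComm

variable {V : Type*} [NormedAddCommGroup V] [InnerProductSpace ℝ V]
variable {R : Type*} [Field R]

lemma aux_aval_shiftR (c : ℝ) (a b : V × ℤ) (h : ⟪b.1, coroot a.1⟫ = 0)
    (x : V) (t : ℝ) : aval c a (x + t • b.1) = aval c a x := by
  simp [aval, inner_add_left, real_inner_smul_left, h]

lemma aux_aval_shift (c : ℝ) (a b : V × ℤ) (h : ⟪b.1, coroot a.1⟫ = 0)
    (x : V) (k : ℤ) : aval c a (x + k • b.1) = aval c a x := by
  rw [← Int.cast_smul_eq_zsmul ℝ]; exact aux_aval_shiftR c a b h x k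

lemma aux_aval_shift' (c : ℝ) (a b : V × ℤ) (h : ⟪b.1, coroot a.1⟫ = 0)
    (x : V) (k : ℤ) : aval c a (x - k • b.1) = aval c a x := by
  rw [sub_eq_add_neg, ← neg_zsmul]; exact aux_aval_shift c a b h x (-k)

lemma aux_sAff_shiftR (c : ℝ) (a b : V × ℤ) (h : ⟪b.1, coroot a.1⟫ = 0)
    (x : V) (t : ℝ) : sAff c a (x + t • b.1) = sAff c a x + t • b.1 := by
  simp only [sAff, aux_aval_shiftR c a b h]
  rw [add_sub_right_comm]

lemma aux_sAff_shift (c : ℝ) (a b : V × ℤ) (h : ⟪b.1, coroot a.1⟫ = 0)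
    (x : V) (k : ℤ) : sAff c a (x + k • b.1) = sAff c a x + k • b.1 := by
  rw [← Int.cast_smul_eq_zsmul ℝ]; exact aux_sAff_shiftR c a b h x k

lemma aux_sAff_shift' (c : ℝ) (a b : V × ℤ) (h : ⟪b.1, coroot a.1⟫ = 0)
    (x : V) (k : ℤ) : sAff c a (x - k • b.1) = sAff c a x - k • b.1 := by
  rw [sub_eq_add_neg, ← neg_zsmul, aux_sAff_shift c a b h x (-k), neg_zsmul,
    ← sub_eq_add_neg]

lemma aux_aval_sAff (c : ℝ) (a b : V × ℤ) (h : ⟪b.1, coroot a.1⟫ = 0)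
    (x : V) : aval c a (sAff c b x) = aval c a x := by
  have e : sAff c b x = x + (-(aval c b x)) • b.1 := by
    simp [sAff, sub_eq_add_neg, neg_smul]
  rw [e, aux_aval_shiftR c a b h]

lemma aux_sAff_comm (c : ℝ) (a b : V × ℤ) (h : ⟪b.1, coroot a.1⟫ = 0)
    (h' : ⟪a.1, coroot b.1⟫ = 0) (x : V) :
    sAff c a (sAff c b x) = sAff c b (sAff c a x) := by
  have e1 : sAff c b x = x + (-(aval c b x)) • b.1 := by
    simp [sAff, sub_eq_add_neg, neg_smul]
  have e2 : sAff c a x = x + (-(aval c a x)) • a.1 := by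
    simp [sAff, sub_eq_add_neg, neg_smul]
  have e3 : sAff c b (sAff c a x) = sAff c a x + (-(aval c b (sAff c a x))) • b.1 := by
    simp [sAff, sub_eq_add_neg, neg_smul]
  rw [e1, aux_sAff_shiftR c a b h, e3, aux_aval_sAff c b a h']

lemma aux_Jop_lin (c : ℝ) (a : V × ℤ) (p q : R) (f g : V → R) (x : V) :
    Jop c a (fun y => p * f y + q * g y) x = p * Jop c a f x + q * Jop c a g x := by
  unfold Jop
  split_ifs <;> simp [Finset.mul_sum, Finset.sum_add_distrib] <;> ring

lemma aux_Jop_sAff (c : ℝ) (a b : V × ℤ) (h : ⟪b.1, coroot a.1⟫ = 0)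
    (h' : ⟪a.1, coroot b.1⟫ = 0) (f : V → R) (x : V) :
    Jop c b f (sAff c a x) = Jop c b (fun y => f (sAff c a y)) x := by
  unfold Jop
  rw [aux_aval_sAff c b a h']
  split_ifs with h1 h2
  · exact neg_inj.2 (Finset.sum_congr rfl fun k _ =>
      congrArg f (aux_sAff_shift' c a b h x k).symm)
  · rfl
  · exact Finset.sum_congr rfl fun k _ =>
      congrArg f (aux_sAff_shift c a b h x k).symm

lemma aux_Jop_Jop (c : ℝ) (a b : V × ℤ) (h : ⟪b.1, coroot a.1⟫ = 0)
    (h' : ⟪a.1, coroot b.1⟫ = 0) (f : V → R) (x : V) :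
    Jop c a (Jop c b f) x = Jop c b (Jop c a f) x := by
  have hBs : ∀ j : ℤ, aval c b (x - j • a.1) = aval c b x :=
    fun j => aux_aval_shift' c b a h' x j
  have hBa : ∀ j : ℤ, aval c b (x + j • a.1) = aval c b x :=
    fun j => aux_aval_shift c b a h' x j
  have hAs : ∀ k : ℤ, aval c a (x - k • b.1) = aval c a x :=
    fun k => aux_aval_shift' c a b h x k
  have hAa : ∀ k : ℤ, aval c a (x + k • b.1) = aval c a x :=
    fun k => aux_aval_shift c a b h x k
  rcases lt_trichotomy 0 (aval c a x) with hA | hA | hA <;>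
    rcases lt_trichotomy 0 (aval c b x) with hB | hB | hB
  · simp only [Jop, hBs, hBa, hAs, hAa]
    simp [hA, hB]
    rw [Finset.sum_comm]
    exact Finset.sum_congr rfl fun k _ => Finset.sum_congr rfl fun j _ =>
      congrArg f (sub_right_comm x (j • a.1) (k • b.1))
  · simp [Jop, hBs, hBa, hAs, hAa, hA, hB.symm]
  · simp only [Jop, hBs, hBa, hAs, hAa]
    simp [hA, hB.not_gt, hB.ne]
    rw [Finset.sum_comm]
    exact Finset.sum_congr rfl fun k _ => Finset.sum_congr rfl fun j _ =>
      congrArg f (sub_add_eq_add_sub x (j • a.1) (k • b.1))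
  · simp [Jop, hBs, hBa, hAs, hAa, hA.symm, hB]
  · simp [Jop, hBs, hBa, hAs, hAa, hA.symm, hB.symm]
  · simp [Jop, hBs, hBa, hAs, hAa, hA.symm, hB.not_gt, hB.ne]
  · simp only [Jop, hBs, hBa, hAs, hAa]
    simp [hA.not_gt, hA.ne, hB]
    rw [Finset.sum_comm]
    exact Finset.sum_congr rfl fun k _ => Finset.sum_congr rfl fun j _ =>
      congrArg f (sub_add_eq_add_sub x (k • b.1) (j • a.1)).symm
  · simp [Jop, hBs, hBa, hAs, hAa, hA.not_gt, hA.ne, hB.symm]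
  · simp only [Jop, hBs, hBa, hAs, hAa]
    simp [hA.not_gt, hA.ne, hB.not_gt, hB.ne]
    rw [Finset.sum_comm]
    exact Finset.sum_congr rfl fun k _ => Finset.sum_congr rfl fun j _ =>
      congrArg f (add_right_comm x (j • a.1) (k • b.1))
lemma aux_Iop_comm (c : ℝ) (a b : V × ℤ) (h : ⟪b.1, coroot a.1⟫ = 0)
    (h' : ⟪a.1, coroot b.1⟫ = 0) (τ : V × ℤ → R) (f : V → R) (x : V) :
    Iop c τ a (Iop c τ b f) x = Iop c τ b (Iop c τ a f) x := by
  have hexb : Iop c τ b f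
      = fun y => τ b * f (sAff c b y) + (τ b - (τ b)⁻¹) * Jop c b f y := rfl
  have hexa : Iop c τ a f
      = fun y => τ a * f (sAff c a y) + (τ a - (τ a)⁻¹) * Jop c a f y := rfl
  simp only [Iop, hexb, hexa, aux_Jop_lin]
  rw [← aux_Jop_sAff c a b h h' f x, ← aux_Jop_sAff c b a h' h f x,
    aux_sAff_comm c a b h h' x, aux_Jop_Jop c a b h h' f x]
  ring

end AuxComm

open RootSystemData in
/-- integral-reflection operators attached to perpendicular affine roots
commute, as operators on functions over the weight lattice `P`. -/
theorem statement3 {V : Type*} [NormedAddCommGroup V] [InnerProductSpace ℝ V]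
    (D : RootSystemData V) (cz : ℤ) (hc : 1 < cz)
    (τ : V × ℤ → ℂ) (hτ : D.IsMultiplicity (cz : ℝ) τ)
    (α β : V) (hα : α ∈ D.R0) (hβ : β ∈ D.R0) (r l : ℤ)
    (hperp : ⟪α, coroot β⟫ = 0) :
    ∀ f : V → ℂ, ∀ lam ∈ D.weightLattice,
      Iop (cz : ℝ) τ (α, r) (Iop (cz : ℝ) τ (β, l) f) lam
        = Iop (cz : ℝ) τ (β, l) (Iop (cz : ℝ) τ (α, r) f) lam := by
  have hβ0 : β ≠ 0 := D.ne_zero β hβ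
  have hαβ : ⟪α, β⟫ = 0 := by
    have h2 : ⟪α, coroot β⟫ = (2 / ⟪β, β⟫) * ⟪α, β⟫ := by
      simp [coroot, real_inner_smul_right]
    have hne : (2 / ⟪β, β⟫ : ℝ) ≠ 0 := by
      have hp : (0:ℝ) < ⟪β, β⟫ := by
        rw [real_inner_self_eq_norm_sq]
        exact pow_pos (norm_pos_iff.2 hβ0) 2
      positivity
    have := hperp
    rw [h2] at this
    exact (mul_eq_zero.1 this).resolve_left hne
  have hrev : ⟪β, coroot α⟫ = 0 := by
    have h2 : ⟪β, coroot α⟫ = (2 / ⟪α, α⟫) * ⟪β, α⟫ := by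
      simp [coroot, real_inner_smul_right]
    rw [h2, real_inner_comm α β, hαβ, mul_zero]
  intro f lam _
  exact aux_Iop_comm (cz : ℝ) (α, r) (β, l) hrev hperp τ f lam
end
end

section
/- Assume |τ_{α∨}| ≠ 1 for all α ∈ R₀. Let ξ ∈ V be regular, i.e. ⟨ξ,α⟩ ∉ 2πℤ for all α ∈ R₀, set C(ζ) := ∏_{α∈R₀⁺} (1 − τ_{α∨}² e^{−i⟨ζ,α⟩})/(1 − e^{−i⟨ζ,α⟩}), and define φ_ξ : P → ℂ by φ_ξ(λ) := ∑_{v∈W₀} C(vξ) e^{i⟨vξ,λ⟩}. If ξ satisfies the Bethe-type equations e^{ic⟨ξ,ν⟩} = ∏_{α∈R₀⁺} ((1 − τ_{α∨}² e^{i⟨ξ,α⟩})/(τ_{α∨}² − e^{i⟨ξ,α⟩}))^{⟨ν,α∨⟩} for all ν ∈ Q, then I₀ φ_ξ = τ₀ φ_ξ, where I₀ is the integral-reflection operator attached to the simple affine root a₀ = −ϑ∨ + c. -/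
open scoped RealInnerProductSpace BigOperators Classical

noncomputable section

open RootSystemData in
/-- The Harish-Chandra type `c`-function
`C(ζ) = ∏_{α ∈ R₀⁺} (1 - τ_{α∨}² e^{-i⟨ζ,α⟩})/(1 - e^{-i⟨ζ,α⟩})`. -/
def Cfun {V : Type*} [NormedAddCommGroup V] [InnerProductSpace ℝ V]
    (D : RootSystemData V) (τ : V → ℂ) (ζ : V) : ℂ :=
  ∏ α ∈ D.pos,
    (1 - (τ α) ^ 2 * Complex.exp (-(Complex.I * (⟪ζ, α⟫ : ℝ)))) /
      (1 - Complex.exp (-(Complex.I * (⟪ζ, α⟫ : ℝ))))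

open RootSystemData in
/-- The Bethe Ansatz wave function `φ_ξ(λ) = ∑_{v ∈ W₀} C(vξ) e^{i⟨vξ,λ⟩}`. -/
def planeWaveSum {V : Type*} [NormedAddCommGroup V] [InnerProductSpace ℝ V]
    (D : RootSystemData V) (τ : V → ℂ) (W0fin : Finset (Equiv.Perm V))
    (ξ lam : V) : ℂ :=
  ∑ w ∈ W0fin, Cfun D τ (w ξ) * Complex.exp (Complex.I * (⟪w ξ, lam⟫ : ℝ))

theorem Equiv.Perm.apply_inv_self {α : Type*} (f : Equiv.Perm α) (x : α) : f (f⁻¹ x) = x :=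
  f.apply_symm_apply x

theorem Equiv.Perm.inv_apply_self {α : Type*} (f : Equiv.Perm α) (x : α) : f⁻¹ (f x) = x :=
  f.symm_apply_apply x

namespace S9Aux
open Complex RootSystemData

variable {V : Type*} [NormedAddCommGroup V] [InnerProductSpace ℝ V]

lemma inner_self_ne {α : V} (h : α ≠ 0) : ⟪α, α⟫ ≠ 0 := by
  intro h'
  exact h (inner_self_eq_zero.mp h')

lemma inner_coroot (x α : V) : ⟪x, coroot α⟫ = 2 / ⟪α, α⟫ * ⟪x, α⟫ := by
  simp [coroot, real_inner_smul_right]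

lemma coroot_neg (α : V) : coroot (-α) = - coroot α := by
  simp [coroot, smul_neg]

lemma inner_coroot_self {α : V} (h : α ≠ 0) : ⟪α, coroot α⟫ = 2 := by
  rw [inner_coroot]
  field_simp [inner_self_ne h]

lemma coroot_smul_self (α : V) : ⟪α, coroot α⟫ • α = (2:ℝ) • α := by
  rcases eq_or_ne α 0 with h | h
  · simp [h]
  · rw [inner_coroot_self h]

/-- the reflection attached to a root, as a plain function -/
def refl (α : V) (x : V) : V := x - ⟪x, coroot α⟫ • α

lemma refl_add (α x y : V) : refl α (x + y) = refl α x + refl α y := by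
  simp only [refl, inner_add_left, add_smul]
  abel

lemma refl_smul (α : V) (r : ℝ) (x : V) : refl α (r • x) = r • refl α x := by
  simp only [refl, real_inner_smul_left, smul_sub, mul_smul]

lemma refl_neg (α x : V) : refl α (-x) = - refl α x := by
  have := refl_smul α (-1) x
  simpa using this

lemma refl_inner (α : V) (x y : V) : ⟪refl α x, refl α y⟫ = ⟪x, y⟫ := by
  rcases eq_or_ne α 0 with h | h
  · simp [refl, h]
  · simp only [refl, inner_sub_left, inner_sub_right, real_inner_smul_left,
      real_inner_smul_right, inner_coroot]
    have h0 := inner_self_ne h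
    field_simp
    rw [real_inner_comm α y]
    ring

lemma refl_refl (α x : V) : refl α (refl α x) = x := by
  rcases eq_or_ne α 0 with h | h
  · simp [refl, h]
  · simp only [refl, inner_sub_left, real_inner_smul_left, inner_coroot_self h, sub_smul,
      smul_smul]
    have h0 := inner_self_ne h
    rw [inner_coroot]
    field_simp
    module

lemma refl_self (α : V) : refl α α = -α := by
  simp only [refl, coroot_smul_self]
  module

lemma refl_adj (α x y : V) : ⟪refl α x, y⟫ = ⟪x, refl α y⟫ := by
  simp only [refl, inner_sub_left, inner_sub_right, real_inner_smul_left, real_inner_smul_right,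
    inner_coroot]
  rw [real_inner_comm α y]
  ring

lemma refl_coroot (α γ : V) : coroot (refl α γ) = refl α (coroot γ) := by
  unfold coroot
  rw [refl_inner, refl_smul]

/-- the reflection as a permutation -/
def reflPerm (α : V) : Equiv.Perm V :=
  ⟨refl α, refl α, fun x => refl_refl α x, fun x => refl_refl α x⟩

@[simp] lemma reflPerm_apply (α x : V) : reflPerm α x = refl α x := rfl

variable (D : RootSystemData V)

lemma reflPerm_mem {α : V} (hα : α ∈ D.R0) : reflPerm α ∈ D.W0 :=
  Subgroup.subset_closure ⟨α, hα, fun _ => rfl⟩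

lemma neg_mem {α : V} (hα : α ∈ D.R0) : -α ∈ D.R0 := by
  have := D.reflect_mem α hα α hα
  rcases eq_or_ne α 0 with h | h
  · simpa [h] using this
  · rwa [inner_coroot_self h, show α - (2:ℝ) • α = -α by module] at this

lemma refl_mem {α γ : V} (hα : α ∈ D.R0) (hγ : γ ∈ D.R0) : refl α γ ∈ D.R0 :=
  D.reflect_mem α hα γ hγ

/-- goodness predicate for Weyl group elements -/
def Good (w : Equiv.Perm V) : Prop :=
  (∀ x y : V, ⟪w x, w y⟫ = ⟪x, y⟫) ∧ (∀ x y : V, w (x + y) = w x + w y) ∧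
  (∀ (r : ℝ) (x : V), w (r • x) = r • w x) ∧ (∀ α ∈ D.R0, w α ∈ D.R0) ∧
  (∀ α ∈ D.R0, w⁻¹ α ∈ D.R0)

lemma good_of_mem {w : Equiv.Perm V} (hw : w ∈ D.W0) : Good D w := by
  induction hw using Subgroup.closure_induction with
  | mem e he =>
    obtain ⟨α, hα, hfor⟩ := he
    have hinv : ∀ x, e⁻¹ x = refl α x := by
      intro x
      apply e.injective
      rw [Equiv.Perm.apply_inv_self, hfor]
      exact (refl_refl α x).symm
    refine ⟨?_, ?_, ?_, ?_, ?_⟩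
    · intro x y; rw [hfor, hfor]; exact refl_inner α x y
    · intro x y; rw [hfor, hfor, hfor]; exact refl_add α x y
    · intro r x; rw [hfor, hfor]; exact refl_smul α r x
    · intro β hβ; rw [hfor]; exact refl_mem D hα hβ
    · intro β hβ; rw [hinv]; exact refl_mem D hα hβ
  | one => exact ⟨fun _ _ => rfl, fun _ _ => rfl, fun _ _ => rfl, fun _ h => h, fun _ h => h⟩
  | mul u v hu hv Gu Gv =>
    obtain ⟨iu, au, su, ru, ru'⟩ := Gu
    obtain ⟨iv, av, sv, rv, rv'⟩ := Gv
    refine ⟨?_, ?_, ?_, ?_, ?_⟩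
    · intro x y; rw [Equiv.Perm.mul_apply, Equiv.Perm.mul_apply, iu, iv]
    · intro x y; rw [Equiv.Perm.mul_apply, Equiv.Perm.mul_apply, Equiv.Perm.mul_apply, av, au]
    · intro r x; rw [Equiv.Perm.mul_apply, Equiv.Perm.mul_apply, sv, su]
    · intro β hβ; rw [Equiv.Perm.mul_apply]; exact ru _ (rv _ hβ)
    · intro β hβ; rw [mul_inv_rev, Equiv.Perm.mul_apply]; exact rv' _ (ru' _ hβ)
  | inv u hu Gu =>
    obtain ⟨iu, au, su, ru, ru'⟩ := Gu
    refine ⟨?_, ?_, ?_, ru', ?_⟩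
    · intro x y
      rw [← iu (u⁻¹ x) (u⁻¹ y), Equiv.Perm.apply_inv_self, Equiv.Perm.apply_inv_self]
    · intro x y
      apply u.injective
      rw [Equiv.Perm.apply_inv_self, au, Equiv.Perm.apply_inv_self, Equiv.Perm.apply_inv_self]
    · intro r x
      apply u.injective
      rw [Equiv.Perm.apply_inv_self, su, Equiv.Perm.apply_inv_self]
    · intro β hβ; rw [inv_inv]; exact ru _ hβ

variable {D}

lemma Good.inner' {w : Equiv.Perm V} (G : Good D w) (x y : V) : ⟪w x, y⟫ = ⟪x, w⁻¹ y⟫ := by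
  conv_lhs => rw [← Equiv.Perm.apply_inv_self w y]
  exact G.1 x (w⁻¹ y)

lemma Good.neg {w : Equiv.Perm V} (G : Good D w) (x : V) : w (-x) = - w x := by
  have := G.2.2.1 (-1) x
  simpa using this

lemma Good.coroot_apply {w : Equiv.Perm V} (G : Good D w) (β : V) :
    coroot (w β) = w (coroot β) := by
  unfold coroot
  rw [G.1, ← G.2.2.1]

section RootComb
variable (D : RootSystemData V)

lemma theta_mem : D.hshort ∈ D.R0 := D.pos_subset D.hshort_mem

lemma theta_ne : D.hshort ≠ 0 := D.ne_zero _ (theta_mem D)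

lemma simples_indep : LinearIndependent ℝ D.simpleRoot := by
  apply linearIndependent_of_top_le_span_of_card_eq_finrank
  · have hpos : ∀ α ∈ D.pos, α ∈ Submodule.span ℝ (Set.range D.simpleRoot) := by
      intro α hα
      obtain ⟨k, hk⟩ := D.pos_natCombo α hα
      rw [hk]
      exact Submodule.sum_mem _ fun j _ =>
        Submodule.smul_mem _ _ (Submodule.subset_span ⟨j, rfl⟩)
    rw [← D.span_top]
    apply Submodule.span_le.mpr
    intro α hα
    rcases D.pos_or_neg α hα with h | h
    · exact hpos α h
    · have := hpos _ h
      simpa using Submodule.neg_mem _ this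
  · simp [D.rank_eq]

lemma dominance : ∀ γ ∈ D.pos, 0 ≤ ⟪D.hshort, coroot γ⟫ := by
  intro γ hγ
  by_contra hneg
  push_neg at hneg
  set θ := D.hshort with hθdef
  have hγR : γ ∈ D.R0 := D.pos_subset hγ
  have hγ0 : γ ≠ 0 := D.ne_zero γ hγR
  have hδR : θ - ⟪θ, coroot γ⟫ • γ ∈ D.R0 := D.reflect_mem γ hγR θ (theta_mem D)
  set δ := θ - ⟪θ, coroot γ⟫ • γ with hδdef
  have hinner : ⟪δ, δ⟫ = ⟪θ, θ⟫ := by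
    rw [hδdef]
    simp only [inner_sub_left, inner_sub_right, real_inner_smul_left, real_inner_smul_right,
      inner_coroot]
    have h0 := inner_self_ne hγ0
    field_simp
    rw [real_inner_comm γ θ]
    ring
  have hnorm : ‖δ‖ = ‖θ‖ := by
    have h1 : ‖δ‖ * ‖δ‖ = ‖θ‖ * ‖θ‖ := by
      rw [← real_inner_self_eq_norm_mul_norm, ← real_inner_self_eq_norm_mul_norm, hinner]
    nlinarith [norm_nonneg δ, norm_nonneg θ]
  obtain ⟨m, hm⟩ := D.hshort_highest δ hδR hnorm
  obtain ⟨g, hg⟩ := D.pos_natCombo γ hγ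
  obtain ⟨k, hk⟩ := D.crystallographic γ hγR θ (theta_mem D)
  have hksneg : (k:ℝ) < 0 := by rw [← hk]; exact hneg
  have hmain : ∀ j, (m j : ℝ) = (k:ℝ) * (g j : ℝ) := by
    have heq : ∑ j, ((m j : ℝ) - (k:ℝ) * (g j : ℝ)) • D.simpleRoot j = 0 := by
      have h1 : θ - δ = ⟪θ, coroot γ⟫ • γ := by rw [hδdef]; abel
      rw [hm] at h1
      rw [hk, hg] at h1
      rw [Finset.smul_sum] at h1
      have := h1
      simp only [sub_smul, smul_smul] at *
      rw [Finset.sum_sub_distrib]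
      rw [h1]
      abel
    intro j
    have := Fintype.linearIndependent_iff.mp (simples_indep D)
      (fun j => (m j : ℝ) - (k:ℝ) * (g j : ℝ)) heq j
    linarith
  have hgz : ∀ j, (g j : ℝ) = 0 := by
    intro j
    have h1 := hmain j
    have h2 : (0:ℝ) ≤ (m j : ℝ) := Nat.cast_nonneg _
    have h3 : (0:ℝ) ≤ (g j : ℝ) := Nat.cast_nonneg _
    nlinarith
  apply hγ0
  rw [hg]
  apply Finset.sum_eq_zero
  intro j _
  rw [hgz j, zero_smul]

lemma eq_theta_of_two {γ : V} (hγ : γ ∈ D.R0) (h2 : ⟪D.hshort, coroot γ⟫ = 2) :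
    γ = D.hshort := by
  set θ := D.hshort
  have hγ0 : γ ≠ 0 := D.ne_zero γ hγ
  have hγn : ‖γ‖ ≠ 0 := norm_ne_zero_iff.mpr hγ0
  have h0 := inner_self_ne hγ0
  have hip : ⟪θ, γ⟫ = ‖γ‖ * ‖γ‖ := by
    rw [inner_coroot] at h2
    rw [← real_inner_self_eq_norm_mul_norm]
    field_simp at h2
    linarith
  have hcs : ⟪θ, γ⟫ ≤ ‖θ‖ * ‖γ‖ := real_inner_le_norm θ γ
  have hshort : ‖θ‖ ≤ ‖γ‖ := D.hshort_short γ hγ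
  have hnormeq : ‖θ‖ = ‖γ‖ := by nlinarith [norm_nonneg γ, norm_nonneg θ]
  have hip2 : ⟪θ, γ⟫ = ‖θ‖ * ‖γ‖ := by rw [hnormeq, ← hip]
  have := inner_eq_norm_mul_iff_real.mp hip2
  have h3 : ‖γ‖ • θ = ‖γ‖ • γ := by rw [this, hnormeq]
  have := smul_right_injective V hγn h3
  exact this.symm

lemma coroot_bound {γ : V} (hγ : γ ∈ D.R0) : |⟪D.hshort, coroot γ⟫| ≤ 2 := by
  set θ := D.hshort
  have hγ0 : γ ≠ 0 := D.ne_zero γ hγ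
  have hγn : (0:ℝ) < ‖γ‖ := norm_pos_iff.mpr hγ0
  have h0 : (0:ℝ) < ⟪γ, γ⟫ := by
    rw [real_inner_self_eq_norm_mul_norm]; exact mul_pos hγn hγn
  rw [inner_coroot, abs_mul, abs_div]
  have h1 : |⟪θ, γ⟫| ≤ ‖θ‖ * ‖γ‖ := abs_real_inner_le_norm θ γ
  have h2 : ‖θ‖ ≤ ‖γ‖ := D.hshort_short γ hγ
  have h3 : ⟪γ, γ⟫ = ‖γ‖ * ‖γ‖ := real_inner_self_eq_norm_mul_norm γ
  rw [abs_of_pos h0, h3]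
  rw [div_mul_eq_mul_div, div_le_iff₀ (by positivity)]
  have h4 : |⟪θ, γ⟫| ≤ ‖γ‖ * ‖γ‖ := le_trans h1 (by nlinarith [norm_nonneg θ])
  rw [_root_.abs_two]
  nlinarith

lemma refl_theta_not_pos {γ : V} (hγ : γ ∈ D.R0) (h1 : ⟪D.hshort, coroot γ⟫ = 1) :
    γ ∈ D.pos ∧ refl D.hshort γ ∉ D.pos := by
  set θ := D.hshort with hθdef
  have hγ0 : γ ≠ 0 := D.ne_zero γ hγ
  have h0 := inner_self_ne hγ0
  constructor
  · rcases D.pos_or_neg γ hγ with h | h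
    · exact h
    · exfalso
      have := dominance D _ h
      rw [coroot_neg] at this
      simp only [inner_neg_right] at this
      rw [h1] at this
      linarith
  · intro hmem
    have hδR : refl θ γ ∈ D.R0 := refl_mem D (theta_mem D) hγ
    have := dominance D _ hmem
    rw [refl_coroot] at this
    rw [show ⟪θ, refl θ (coroot γ)⟫ = ⟪refl θ θ, coroot γ⟫ from (refl_adj θ θ (coroot γ)).symm]
      at this
    rw [refl_self] at this
    simp only [inner_neg_left] at this
    rw [h1] at this
    linarith

lemma refl_fix {γ : V} (hγ : γ ∈ D.R0) (h0 : ⟪D.hshort, coroot γ⟫ = 0) :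
    refl D.hshort γ = γ := by
  have hγ0 : γ ≠ 0 := D.ne_zero γ hγ
  have h1 : ⟪D.hshort, γ⟫ = 0 := by
    rw [inner_coroot] at h0
    rcases mul_eq_zero.mp h0 with h | h
    · exfalso
      rcases div_eq_zero_iff.mp h with h' | h'
      · norm_num at h'
      · exact inner_self_ne hγ0 h'
    · exact h
  have h2 : ⟪γ, coroot D.hshort⟫ = 0 := by
    rw [inner_coroot, real_inner_comm D.hshort γ, h1, mul_zero]
  rw [refl, h2, zero_smul, sub_zero]

end RootComb

section Analytic

lemma prod_zpow_sum {x : ℂ} (hx : x ≠ 0) {ι : Type*} (s : Finset ι) (n : ι → ℤ) :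
    ∏ a ∈ s, x ^ n a = x ^ (∑ a ∈ s, n a) := by
  induction s using Finset.cons_induction with
  | empty => simp
  | cons a s ha ih => rw [Finset.prod_cons, Finset.sum_cons, ih, zpow_add₀ hx]

lemma sum_Icc_zpow (q : ℂ) (hq1 : q ≠ 1) {M : ℤ} (hM : 0 < M) :
    ∑ k ∈ Finset.Icc (1:ℤ) M, q ^ k = -(q * (1 - q ^ M) / (q - 1)) := by
  have h1 : ∑ k ∈ Finset.Icc (1:ℤ) M, q ^ k = ∑ n ∈ Finset.range M.toNat, q ^ ((n:ℤ) + 1) := by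
    refine Finset.sum_nbij' (fun k => (k - 1).toNat) (fun n => (n:ℤ) + 1) ?_ ?_ ?_ ?_ ?_
    · intro k hk; simp only [Finset.mem_Icc] at hk; simp only [Finset.mem_range]; omega
    · intro n hn; simp only [Finset.mem_range] at hn; simp only [Finset.mem_Icc]; omega
    · intro k hk; simp only [Finset.mem_Icc] at hk; omega
    · intro n hn; simp only [Finset.mem_range] at hn; omega
    · intro k hk; simp only [Finset.mem_Icc] at hk
      congr 1; omega
  rw [h1]
  have h2 : ∀ n : ℕ, q ^ ((n:ℤ) + 1) = q ^ n * q := by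
    intro n
    rw [show ((n:ℤ)+1) = ((n+1 : ℕ) : ℤ) by push_cast; ring, zpow_natCast, pow_succ]
  simp_rw [h2]
  rw [← Finset.sum_mul, geom_sum_eq hq1]
  have h3 : q ^ M = q ^ M.toNat := by
    rw [← zpow_natCast, Int.toNat_of_nonneg hM.le]
  rw [h3]
  have h4 : q - 1 ≠ 0 := sub_ne_zero.mpr hq1
  field_simp
  ring

lemma sum_Ico_zpow (q : ℂ) (hq0 : q ≠ 0) (hq1 : q ≠ 1) {M : ℤ} (hM : M < 0) :
    ∑ k ∈ Finset.Ico (0:ℤ) (-M), q ^ (-k) = q * (1 - q ^ M) / (q - 1) := by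
  have hqi : q⁻¹ ≠ 1 := fun h => hq1 (by rw [← inv_inv q, h, inv_one])
  have h1 : ∑ k ∈ Finset.Ico (0:ℤ) (-M), q ^ (-k)
      = ∑ n ∈ Finset.range (-M).toNat, (q⁻¹) ^ n := by
    refine Finset.sum_nbij' (fun k : ℤ => k.toNat) (fun n : ℕ => (n:ℤ)) ?_ ?_ ?_ ?_ ?_
    · intro k hk; simp only [Finset.mem_Ico] at hk; simp only [Finset.mem_range]; omega
    · intro n hn; simp only [Finset.mem_range] at hn; simp only [Finset.mem_Ico]; omega
    · intro k hk; simp only [Finset.mem_Ico] at hk; omega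
    · intro n hn; simp only [Finset.mem_range] at hn; omega
    · intro k hk; simp only [Finset.mem_Ico] at hk
      rw [zpow_neg, ← inv_zpow, ← zpow_natCast (q⁻¹) k.toNat]
      congr 1; omega
  rw [h1, geom_sum_eq hqi]
  have h2 : (q⁻¹) ^ (-M).toNat = q ^ M := by
    rw [inv_pow, ← zpow_natCast q, Int.toNat_of_nonneg (by omega : (0:ℤ) ≤ -M)]
    rw [← zpow_neg, neg_neg]
  rw [h2]
  have h3 : q - 1 ≠ 0 := sub_ne_zero.mpr hq1
  have h4 : q⁻¹ - 1 ≠ 0 := sub_ne_zero.mpr hqi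
  have h5 : (1:ℂ) - q ≠ 0 := sub_ne_zero.mpr (Ne.symm hq1)
  field_simp
  ring

lemma exp_I_ne_one {x : ℝ} (h : ∀ k : ℤ, x ≠ 2 * Real.pi * k) :
    Complex.exp (Complex.I * (x:ℝ)) ≠ 1 := by
  intro hx
  obtain ⟨n, hn⟩ := Complex.exp_eq_one_iff.mp hx
  have h2 : Complex.I * ((x:ℝ):ℂ) = Complex.I * ((2 * Real.pi * n : ℝ):ℂ) := by
    rw [hn]; push_cast; ring
  have h3 := mul_left_cancel₀ Complex.I_ne_zero h2
  exact h n (Complex.ofReal_inj.mp h3)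

lemma abs_exp_I (x : ℝ) : ‖Complex.exp (Complex.I * (x:ℝ))‖ = 1 := by
  rw [Complex.norm_exp]
  simp [Complex.mul_re]

lemma sub_exp_ne {t : ℂ} (ht : ‖t‖ ≠ 1) (x : ℝ) :
    t - Complex.exp (Complex.I * (x:ℝ)) ≠ 0 := by
  intro h
  rw [sub_eq_zero] at h
  exact ht (by rw [h, abs_exp_I])

lemma one_sub_mul_exp_ne {t : ℂ} (ht : ‖t‖ ≠ 1) (x : ℝ) :
    1 - t * Complex.exp (Complex.I * (x:ℝ)) ≠ 0 := by
  intro h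
  apply ht
  have h1 : t * Complex.exp (Complex.I * (x:ℝ)) = 1 := by linear_combination -h
  have h2 := congrArg (‖·‖) h1
  rwa [norm_mul, abs_exp_I, mul_one, norm_one] at h2

lemma sq_abs_ne_one {t : ℂ} (h : ‖t‖ ≠ 1) : ‖t^2‖ ≠ 1 := by
  rw [norm_pow]
  intro h2
  apply h
  have h0 : 0 ≤ ‖t‖ := norm_nonneg t
  have h3 : (‖t‖ - 1) * (‖t‖ + 1) = 0 := by nlinarith
  rcases mul_eq_zero.mp h3 with h4 | h4
  · linarith
  · linarith

end Analytic

section FzPart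

/-- The building block `F(ζ,α) = (1-τ_α² e^{i⟨ζ,α⟩})/(τ_α² - e^{i⟨ζ,α⟩})`. -/
def Fz (τ : V → ℂ) (ζ α : V) : ℂ :=
  (1 - τ α ^ 2 * Complex.exp (Complex.I * (⟪ζ, α⟫:ℝ))) /
    (τ α ^ 2 - Complex.exp (Complex.I * (⟪ζ, α⟫:ℝ)))

variable {τ : V → ℂ} {ζ : V}

lemma Fz_ne_zero {α : V} (hmod : ‖τ α‖ ≠ 1) : Fz τ ζ α ≠ 0 :=
  div_ne_zero (one_sub_mul_exp_ne (sq_abs_ne_one hmod) _) (sub_exp_ne (sq_abs_ne_one hmod) _)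

lemma exp_inv_eq (x : ℝ) :
    Complex.exp (Complex.I * ((-x : ℝ):ℂ)) = (Complex.exp (Complex.I * (x:ℝ)))⁻¹ := by
  rw [Complex.ofReal_neg, mul_neg, Complex.exp_neg]

lemma Fz_neg {α : V} (hmod : ‖τ α‖ ≠ 1) (hτn : τ (-α) = τ α) :
    Fz τ ζ (-α) = (Fz τ ζ α)⁻¹ := by
  have hz0 : Complex.exp (Complex.I * (⟪ζ, α⟫:ℝ)) ≠ 0 := Complex.exp_ne_zero _
  have h1 : 1 - τ α ^ 2 * Complex.exp (Complex.I * (⟪ζ, α⟫:ℝ)) ≠ 0 :=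
    one_sub_mul_exp_ne (sq_abs_ne_one hmod) _
  have h3 : τ α ^ 2 - (Complex.exp (Complex.I * (⟪ζ, α⟫:ℝ)))⁻¹ ≠ 0 := by
    rw [← exp_inv_eq]
    exact sub_exp_ne (sq_abs_ne_one hmod) _
  unfold Fz
  rw [hτn, inner_neg_right, Complex.ofReal_neg, mul_neg, Complex.exp_neg, inv_div,
    div_eq_div_iff h3 h1]
  field_simp
  ring

lemma Fz_decomp (D : RootSystemData V) (hmod : ∀ α ∈ D.R0, ‖τ α‖ ≠ 1)
    (hτneg : ∀ α ∈ D.R0, τ (-α) = τ α) {γ : V} (hγ : γ ∈ D.R0) :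
    Fz τ ζ γ = ∏ β ∈ D.pos, Fz τ ζ β ^ (if γ = β then (1:ℤ) else if γ = -β then -1 else 0) := by
  have hγ0 : γ ≠ 0 := D.ne_zero γ hγ
  rcases D.pos_or_neg γ hγ with h | h
  · rw [Finset.prod_eq_single_of_mem γ h ?side]
    · rw [if_pos rfl, zpow_one]
    case side =>
      intro b hb hbne
      have h1 : γ ≠ b := Ne.symm hbne
      have h2 : γ ≠ -b := by
        intro hh
        exact D.pos_not_both b hb (hh ▸ h)
      rw [if_neg h1, if_neg h2, zpow_zero]
  · rw [Finset.prod_eq_single_of_mem (-γ) h ?side]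
    · have hne1 : γ ≠ -γ := by
        intro hh
        apply hγ0
        have h2 : γ + γ = 0 := by nth_rewrite 2 [hh]; simp
        have h3 : (2:ℝ) • γ = 0 := by rw [two_smul]; exact h2
        simpa using smul_eq_zero.mp h3
      rw [if_neg hne1, if_pos (neg_neg γ).symm]
      rw [Fz_neg (hmod γ hγ) (hτneg γ hγ), zpow_neg_one, inv_inv]
    case side =>
      intro b hb hbne
      have hγnp : γ ∉ D.pos := by
        have := D.pos_not_both (-γ) h
        rwa [neg_neg] at this
      have h1 : γ ≠ b := fun hh => hγnp (hh ▸ hb)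
      have h2 : γ ≠ -b := by
        intro hh
        exact hbne (by rw [hh, neg_neg])
      rw [if_neg h1, if_neg h2, zpow_zero]

end FzPart

section CratioKey
variable (D : RootSystemData V)

lemma ne_neg_self' {x : V} (hx : x ≠ 0) : x ≠ -x := by
  intro hh
  apply hx
  have h2 : x + x = 0 := by nth_rewrite 2 [hh]; simp
  have h3 : (2:ℝ) • x = 0 := by rw [two_smul]; exact h2
  simpa using smul_eq_zero.mp h3

/-- positive roots made negative by the reflection in ϑ -/
def Spos : Finset V := D.pos.filter (fun α => refl D.hshort α ∉ D.pos)

/-- signed involution on positive roots induced by `s_ϑ` -/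
def sig (α : V) : V := if refl D.hshort α ∈ D.pos then refl D.hshort α else - refl D.hshort α

lemma sig_mem {α : V} (hα : α ∈ D.pos) : sig D α ∈ D.pos := by
  unfold sig
  split_ifs with h
  · exact h
  · rcases D.pos_or_neg (refl D.hshort α) (refl_mem D (theta_mem D) (D.pos_subset hα)) with h' | h'
    · exact absurd h' h
    · exact h'

lemma sig_sig {α : V} (hα : α ∈ D.pos) : sig D (sig D α) = α := by
  by_cases h : refl D.hshort α ∈ D.pos
  · have h1 : sig D α = refl D.hshort α := if_pos h
    rw [h1, sig, refl_refl, if_pos hα]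
  · have h1 : sig D α = -refl D.hshort α := if_neg h
    rw [h1, sig, refl_neg, refl_refl, if_neg (D.pos_not_both α hα), neg_neg]

variable (τ : V → ℂ)

lemma Cratio (hmod : ∀ α ∈ D.R0, ‖τ α‖ ≠ 1)
    (hτneg : ∀ α ∈ D.R0, τ (-α) = τ α)
    (hτrefl : ∀ α ∈ D.R0, τ (refl D.hshort α) = τ α)
    (ζ : V) (hregζ : ∀ α ∈ D.R0, ∀ k : ℤ, ⟪ζ, α⟫ ≠ 2 * Real.pi * k) :
    Cfun D τ (refl D.hshort ζ) = Cfun D τ ζ * ∏ α ∈ Spos D, Fz τ ζ α := by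
  classical
  set θ := D.hshort with hθdef
  have step1 : Cfun D τ (refl θ ζ)
      = ∏ α ∈ D.pos, (1 - τ α ^ 2 * Complex.exp (-(Complex.I * (⟪ζ, refl θ α⟫:ℝ)))) /
          (1 - Complex.exp (-(Complex.I * (⟪ζ, refl θ α⟫:ℝ)))) := by
    unfold Cfun
    apply Finset.prod_congr rfl
    intro α _
    rw [refl_adj]
  have step2 : (∏ α ∈ D.pos, (1 - τ α ^ 2 * Complex.exp (-(Complex.I * (⟪ζ, refl θ α⟫:ℝ)))) /
          (1 - Complex.exp (-(Complex.I * (⟪ζ, refl θ α⟫:ℝ)))))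
      = ∏ α ∈ D.pos, (1 - τ (sig D α) ^ 2 *
            Complex.exp (-(Complex.I * (⟪ζ, refl θ (sig D α)⟫:ℝ)))) /
          (1 - Complex.exp (-(Complex.I * (⟪ζ, refl θ (sig D α)⟫:ℝ)))) := by
    refine Finset.prod_nbij' (sig D) (sig D) (fun a ha => sig_mem D ha) (fun a ha => sig_mem D ha)
      (fun a ha => sig_sig D ha) (fun a ha => sig_sig D ha) ?_
    intro a ha
    rw [sig_sig D ha]
  have step3 : ∀ α ∈ D.pos, (1 - τ (sig D α) ^ 2 *
            Complex.exp (-(Complex.I * (⟪ζ, refl θ (sig D α)⟫:ℝ)))) /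
          (1 - Complex.exp (-(Complex.I * (⟪ζ, refl θ (sig D α)⟫:ℝ))))
      = ((1 - τ α ^ 2 * Complex.exp (-(Complex.I * (⟪ζ, α⟫:ℝ)))) /
          (1 - Complex.exp (-(Complex.I * (⟪ζ, α⟫:ℝ))))) *
        (if refl θ α ∈ D.pos then 1 else Fz τ ζ α) := by
    intro α hα
    have hαR : α ∈ D.R0 := D.pos_subset hα
    have hrR : refl θ α ∈ D.R0 := refl_mem D (theta_mem D) hαR
    by_cases h : refl θ α ∈ D.pos
    · rw [sig, if_pos h, hτrefl α hαR, refl_refl, if_pos h, mul_one]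
    · rw [sig, if_neg h, if_neg h]
      rw [show τ (-(refl θ α)) = τ α by rw [hτneg _ hrR, hτrefl α hαR],
        refl_neg, refl_refl, inner_neg_right, Complex.ofReal_neg, mul_neg, neg_neg,
        Complex.exp_neg]
      have hz0 : Complex.exp (Complex.I * (⟪ζ, α⟫:ℝ)) ≠ 0 := Complex.exp_ne_zero _
      have hz1 : Complex.exp (Complex.I * (⟪ζ, α⟫:ℝ)) ≠ 1 := exp_I_ne_one (hregζ α hαR)
      have h1 : 1 - Complex.exp (Complex.I * (⟪ζ, α⟫:ℝ)) ≠ 0 :=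
        sub_ne_zero.mpr (Ne.symm hz1)
      have h2 : 1 - (Complex.exp (Complex.I * (⟪ζ, α⟫:ℝ)))⁻¹ ≠ 0 := by
        intro hh
        rw [sub_eq_zero] at hh
        exact hz1 (by rw [← inv_inv (Complex.exp _), ← hh, inv_one])
      have h3 : τ α ^ 2 - Complex.exp (Complex.I * (⟪ζ, α⟫:ℝ)) ≠ 0 :=
        sub_exp_ne (sq_abs_ne_one (hmod α hαR)) _
      unfold Fz
      rw [div_mul_div_comm, div_eq_div_iff h1 (mul_ne_zero h2 h3)]
      field_simp
      ring
  rw [step1, step2, Finset.prod_congr rfl step3, Finset.prod_mul_distrib]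
  congr 1
  rw [Spos, Finset.prod_filter]
  apply Finset.prod_congr rfl
  intro α _
  by_cases h : refl θ α ∈ D.pos
  · rw [if_pos h, if_neg (by simpa using h)]
  · rw [if_neg h, if_pos h]

lemma Ecount (w : Equiv.Perm V) (G : Good D w) {β : V} (hβ : β ∈ D.pos) :
    (∑ α ∈ Spos D, (if w⁻¹ α = β then (1:ℤ) else if w⁻¹ α = -β then -1 else 0))
      + (if w⁻¹ D.hshort = β then (1:ℤ) else if w⁻¹ D.hshort = -β then -1 else 0)
      = ⌊⟪w⁻¹ D.hshort, coroot β⟫⌋ := by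
  classical
  set θ := D.hshort with hθdef
  have hθR : θ ∈ D.R0 := theta_mem D
  have hθ0 : θ ≠ 0 := theta_ne D
  have hβR : β ∈ D.R0 := D.pos_subset hβ
  have hβ0 : β ≠ 0 := D.ne_zero β hβR
  have hγR : w β ∈ D.R0 := G.2.2.2.1 β hβR
  have hcor : ⟪w⁻¹ θ, coroot β⟫ = ⟪θ, coroot (w β)⟫ := by
    rw [G.coroot_apply, ← G.1 (w⁻¹ θ) (coroot β), Equiv.Perm.apply_inv_self]
  obtain ⟨k, hk⟩ := D.crystallographic (w β) hγR θ hθR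
  have hfl : ⌊⟪w⁻¹ θ, coroot β⟫⌋ = k := by rw [hcor, hk, Int.floor_intCast]
  have hbd : |k| ≤ 2 := by
    have h := coroot_bound D hγR
    rw [hk] at h
    exact_mod_cast h
  have hindeq : ∀ α : V, (if w⁻¹ α = β then (1:ℤ) else if w⁻¹ α = -β then -1 else 0)
      = (if α = w β then (1:ℤ) else 0) - (if α = w (-β) then 1 else 0) := by
    intro α
    by_cases h1 : α = w β
    · have e1 : w⁻¹ α = β := by rw [h1, Equiv.Perm.inv_apply_self]
      have e2 : ¬ (α = w (-β)) := by
        intro hh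
        rw [h1] at hh
        exact ne_neg_self' hβ0 (w.injective hh)
      rw [if_pos e1, if_pos h1, if_neg e2]
      norm_num
    · by_cases h2 : α = w (-β)
      · have e1 : w⁻¹ α = -β := by rw [h2, Equiv.Perm.inv_apply_self]
        have e2 : w⁻¹ α ≠ β := by
          rw [e1]
          intro hh
          exact ne_neg_self' hβ0 hh.symm
        rw [if_neg e2, if_pos e1, if_neg h1, if_pos h2]
        norm_num
      · have e1 : w⁻¹ α ≠ β := fun hh => h1 (by rw [← hh, Equiv.Perm.apply_inv_self])
        have e2 : w⁻¹ α ≠ -β := fun hh => h2 (by rw [← hh, Equiv.Perm.apply_inv_self])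
        rw [if_neg e1, if_neg e2, if_neg h1, if_neg h2]
        norm_num
  rw [Finset.sum_congr rfl (fun α _ => hindeq α), Finset.sum_sub_distrib,
      Finset.sum_ite_eq' (Spos D) (w β) (fun _ => (1:ℤ)),
      Finset.sum_ite_eq' (Spos D) (w (-β)) (fun _ => (1:ℤ)), G.neg β, hfl]
  have hSpos : ∀ x : V, x ∈ Spos D ↔ (x ∈ D.pos ∧ refl θ x ∉ D.pos) := by
    intro x
    rw [Spos, Finset.mem_filter]
  have hν1 : (w⁻¹ θ = β) ↔ (θ = w β) := by
    constructor
    · intro h; rw [← h, Equiv.Perm.apply_inv_self]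
    · intro h; rw [h, Equiv.Perm.inv_apply_self]
  have hν2 : (w⁻¹ θ = -β) ↔ (θ = -(w β)) := by
    constructor
    · intro h
      rw [← G.neg, ← h, Equiv.Perm.apply_inv_self]
    · intro h
      have h' : θ = w (-β) := by rw [h, G.neg]
      rw [h', Equiv.Perm.inv_apply_self]
  have hc1 : θ = w β → k = 2 := by
    intro h
    rw [← h, inner_coroot_self hθ0] at hk
    exact_mod_cast hk.symm
  have hc2 : θ = -(w β) → k = -2 := by
    intro h
    have hγθ : w β = -θ := by rw [h, neg_neg]
    rw [hγθ, coroot_neg, inner_neg_right, inner_coroot_self hθ0] at hk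
    have : (-2 : ℝ) = (k:ℝ) := by linarith
    exact_mod_cast this.symm
  have hθSpos : θ ∈ Spos D := by
    rw [hSpos]
    refine ⟨D.hshort_mem, ?_⟩
    rw [refl_self]
    exact D.pos_not_both θ D.hshort_mem
  have hmθ : -θ ∉ D.pos := D.pos_not_both θ D.hshort_mem
  obtain ⟨hbd1, hbd2⟩ := abs_le.mp hbd
  interval_cases k
  · -- k = -2
    have hγθ : w β = -θ := by
      have h' : -(w β) = θ := eq_theta_of_two D (neg_mem D hγR)
        (by rw [coroot_neg, inner_neg_right, hk]; norm_num)
      rw [← h', neg_neg]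
    rw [if_neg (fun hmem => hmθ (hγθ ▸ ((hSpos _).mp hmem).1)),
        if_pos (by rw [hγθ, neg_neg]; exact hθSpos),
        if_neg (fun hh => ne_neg_self' hθ0 ((hν1.mp hh).trans hγθ)),
        if_pos (hν2.mpr (by rw [hγθ, neg_neg]))]
    norm_num
  · -- k = -1
    have h1 := refl_theta_not_pos D (neg_mem D hγR)
      (by rw [coroot_neg, inner_neg_right, hk]; norm_num)
    have hγnp : w β ∉ D.pos := by
      have := D.pos_not_both _ h1.1
      rwa [neg_neg] at this
    rw [if_neg (fun hmem => hγnp ((hSpos _).mp hmem).1),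
        if_pos ((hSpos _).mpr h1),
        if_neg (fun hh => by have := hc1 (hν1.mp hh); omega),
        if_neg (fun hh => by have := hc2 (hν2.mp hh); omega)]
    norm_num
  · -- k = 0
    have hfix : refl θ (w β) = (w β) := refl_fix D hγR (by rw [hk]; norm_num)
    rw [if_neg (fun hmem => ((hSpos _).mp hmem).2
          (by rw [hfix]; exact ((hSpos _).mp hmem).1)),
        if_neg (fun hmem => ((hSpos _).mp hmem).2
          (by rw [refl_neg, hfix]; exact ((hSpos _).mp hmem).1)),
        if_neg (fun hh => by have := hc1 (hν1.mp hh); omega),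
        if_neg (fun hh => by have := hc2 (hν2.mp hh); omega)]
    norm_num
  · -- k = 1
    have h1 := refl_theta_not_pos D hγR (by rw [hk]; norm_num)
    rw [if_pos ((hSpos _).mpr h1),
        if_neg (fun hmem => D.pos_not_both _ h1.1 ((hSpos _).mp hmem).1),
        if_neg (fun hh => by have := hc1 (hν1.mp hh); omega),
        if_neg (fun hh => by have := hc2 (hν2.mp hh); omega)]
    norm_num
  · -- k = 2
    have hγθ : w β = θ := eq_theta_of_two D hγR (by rw [hk]; norm_num)
    rw [if_pos (by rw [hγθ]; exact hθSpos),
        if_neg (fun hmem => hmθ (by rw [← hγθ]; exact ((hSpos _).mp hmem).1)),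
        if_pos (hν1.mpr hγθ.symm)]
    norm_num

lemma Key (hmod : ∀ α ∈ D.R0, ‖τ α‖ ≠ 1)
    (hτneg : ∀ α ∈ D.R0, τ (-α) = τ α)
    (ξ : V) (w : Equiv.Perm V) (G : Good D w)
    (hτw : ∀ α ∈ D.R0, τ (w⁻¹ α) = τ α) (cz : ℤ)
    (hB : Complex.exp (Complex.I * (((cz:ℝ) * ⟪ξ, w⁻¹ D.hshort⟫ : ℝ):ℂ))
      = ∏ α ∈ D.pos, Fz τ ξ α ^ ⌊⟪w⁻¹ D.hshort, coroot α⟫⌋) :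
    (∏ α ∈ Spos D, Fz τ (w ξ) α) * Fz τ (w ξ) D.hshort
      = Complex.exp (Complex.I * (⟪w ξ, D.hshort⟫:ℝ)) ^ cz := by
  classical
  set θ := D.hshort with hθdef
  have hθR : θ ∈ D.R0 := theta_mem D
  have hνR : w⁻¹ θ ∈ D.R0 := G.2.2.2.2 θ hθR
  have hFzw : ∀ α ∈ D.R0, Fz τ (w ξ) α = Fz τ ξ (w⁻¹ α) := by
    intro α hα
    unfold Fz
    rw [hτw α hα, G.inner' ξ α]
  have hRHS : Complex.exp (Complex.I * (⟪w ξ, θ⟫:ℝ)) ^ cz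
      = Complex.exp (Complex.I * (((cz:ℝ) * ⟪ξ, w⁻¹ θ⟫:ℝ):ℂ)) := by
    rw [G.inner' ξ θ, ← Complex.exp_int_mul]
    congr 1
    push_cast
    ring
  rw [hRHS, hB]
  have hL1 : ∀ α ∈ Spos D, Fz τ (w ξ) α = Fz τ ξ (w⁻¹ α) := fun α hα =>
    hFzw α (D.pos_subset (Finset.mem_filter.mp hα).1)
  rw [Finset.prod_congr rfl hL1, hFzw θ hθR]
  have hdec : ∀ α ∈ Spos D, Fz τ ξ (w⁻¹ α)
      = ∏ β ∈ D.pos, Fz τ ξ β ^ (if w⁻¹ α = β then (1:ℤ) else if w⁻¹ α = -β then -1 else 0) :=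
    fun α hα => Fz_decomp D hmod hτneg
      (G.2.2.2.2 α (D.pos_subset (Finset.mem_filter.mp hα).1))
  rw [Finset.prod_congr rfl hdec, Fz_decomp D hmod hτneg hνR, Finset.prod_comm,
    ← Finset.prod_mul_distrib]
  apply Finset.prod_congr rfl
  intro β hβ
  rw [prod_zpow_sum (Fz_ne_zero (hmod β (D.pos_subset hβ))),
    ← zpow_add₀ (Fz_ne_zero (hmod β (D.pos_subset hβ)))]
  congr 1
  exact Ecount D w G hβ

end CratioKey

lemma alg2 (P Y t Q : ℂ) (hnum : 1 - t^2*Q ≠ 0) (hden : t^2 - Q ≠ 0)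
    (h : P * ((1 - t^2*Q)/(t^2 - Q)) = Y) : P = Y * (t^2 - Q) / (1 - t^2*Q) := by
  field_simp at h ⊢
  linear_combination h

lemma heart_alg (C E Q Y t : ℂ) (hQ0 : Q ≠ 0) (hQ1 : Q ≠ 1) (ht : t ≠ 0)
    (hnum : 1 - t^2*Q ≠ 0) (hY : Y ≠ 0) :
    (C * (Y * (t^2 - Q) / (1 - t^2*Q))) * ((t⁻¹ * Q⁻¹ - t)/(Q⁻¹ - 1)) * (Y⁻¹ * E)
      + C * ((t - t⁻¹)*Q/(Q-1)) * E = t * (C*E) := by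
  have hd1 : Q - 1 ≠ 0 := sub_ne_zero.mpr hQ1
  have hd3 : 1 - Q ≠ 0 := sub_ne_zero.mpr (Ne.symm hQ1)
  have hd2 : Q⁻¹ - 1 ≠ 0 := sub_ne_zero.mpr (fun h => hQ1 (by rwa [inv_eq_one] at h))
  have hA : (t⁻¹ * Q⁻¹ - t)/(Q⁻¹ - 1) = (1 - t^2*Q)/(t*(1-Q)) := by
    rw [div_eq_div_iff hd2 (mul_ne_zero ht hd3)]
    field_simp
  rw [hA]
  have e1 : (C * (Y * (t^2 - Q) / (1 - t^2*Q))) * ((1 - t^2*Q)/(t*(1-Q))) * (Y⁻¹ * E)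
      = C * E * (t^2 - Q) / (t*(1-Q)) := by
    field_simp
  rw [e1]
  field_simp
  ring

end S9Aux

open RootSystemData in
/-- if the regular spectral parameter `ξ` satisfies the Bethe-type
equations, then the Bethe Ansatz wave function `φ_ξ` satisfies `I₀ φ_ξ = τ₀ φ_ξ` on the
weight lattice, where `I₀` is the integral-reflection operator of the affine simple
root `a₀ = -ϑ∨ + c`. -/
theorem statement9 {V : Type*} [NormedAddCommGroup V] [InnerProductSpace ℝ V]
    (D : RootSystemData V) (cz : ℤ) (hc : 1 < cz)
    (τ : V → ℂ) (hτ0 : ∀ α ∈ D.R0, τ α ≠ 0)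
    (hτinv : ∀ α ∈ D.R0, ∀ β ∈ D.R0, (∃ w ∈ D.W0, w α = β) → τ α = τ β)
    (hτmod : ∀ α ∈ D.R0, ‖τ α‖ ≠ 1)
    (W0fin : Finset (Equiv.Perm V)) (hW0fin : ∀ w : Equiv.Perm V, w ∈ W0fin ↔ w ∈ D.W0)
    (ξ : V) (hreg : ∀ α ∈ D.R0, ∀ k : ℤ, ⟪ξ, α⟫ ≠ 2 * Real.pi * k)
    (hBethe : ∀ ν ∈ D.rootLattice,
      Complex.exp (Complex.I * ((cz : ℝ) * ⟪ξ, ν⟫ : ℝ))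
        = ∏ α ∈ D.pos,
            ((1 - (τ α) ^ 2 * Complex.exp (Complex.I * (⟪ξ, α⟫ : ℝ))) /
              ((τ α) ^ 2 - Complex.exp (Complex.I * (⟪ξ, α⟫ : ℝ))))
            ^ ⌊⟪ν, coroot α⟫⌋) :
    ∀ lam ∈ D.weightLattice,
      Iop (cz : ℝ) (fun _ : V × ℤ => τ D.hshort) (-D.hshort, (1 : ℤ))
          (planeWaveSum D τ W0fin ξ) lam
        = τ D.hshort * planeWaveSum D τ W0fin ξ lam := by
  intro lam hlam
  classical
  have hθR : D.hshort ∈ D.R0 := S9Aux.theta_mem D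
  have hθ0 : D.hshort ≠ 0 := S9Aux.theta_ne D
  set θ := D.hshort with hθdef
  have hτ0ne : τ θ ≠ 0 := hτ0 θ hθR
  have hτ0mod : ‖τ θ‖ ≠ 1 := hτmod θ hθR
  have tauW : ∀ w ∈ D.W0, ∀ α ∈ D.R0, τ (w α) = τ α := by
    intro w hw α hα
    exact (hτinv α hα (w α) ((S9Aux.good_of_mem D hw).2.2.2.1 α hα) ⟨w, hw, rfl⟩).symm
  have tauneg : ∀ α ∈ D.R0, τ (-α) = τ α := by
    intro α hα
    have h := tauW (S9Aux.reflPerm α) (S9Aux.reflPerm_mem D hα) α hα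
    rwa [S9Aux.reflPerm_apply, S9Aux.refl_self] at h
  have taurefl : ∀ α ∈ D.R0, τ (S9Aux.refl θ α) = τ α := by
    intro α hα
    have h := tauW (S9Aux.reflPerm θ) (S9Aux.reflPerm_mem D hθR) α hα
    rwa [S9Aux.reflPerm_apply] at h
  have hGood : ∀ w ∈ W0fin, S9Aux.Good D w := fun w hw =>
    S9Aux.good_of_mem D ((hW0fin w).mp hw)
  have tauWinv : ∀ w ∈ W0fin, ∀ α ∈ D.R0, τ (w⁻¹ α) = τ α := fun w hw α hα =>
    tauW w⁻¹ (D.W0.inv_mem ((hW0fin w).mp hw)) α hα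
  have hregw : ∀ w ∈ W0fin, ∀ α ∈ D.R0, ∀ k : ℤ, ⟪w ξ, α⟫ ≠ 2 * Real.pi * k := by
    intro w hw α hα k
    rw [(hGood w hw).inner' ξ α]
    exact hreg _ ((hGood w hw).2.2.2.2 α hα) k
  obtain ⟨kθ, hkθ⟩ := hlam θ hθR
  set M : ℤ := cz - kθ with hMdef
  set φ := planeWaveSum D τ W0fin ξ with hφdef
  have haval : aval (cz:ℝ) (-θ, (1:ℤ)) lam = (M:ℝ) := by
    show ⟪lam, coroot (-θ)⟫ + ((1:ℤ):ℝ) * (cz:ℝ) = (M:ℝ)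
    rw [S9Aux.coroot_neg, inner_neg_right, hkθ, hMdef]
    push_cast
    ring
  have hq1 : ∀ w ∈ W0fin, Complex.exp (Complex.I * (⟪w ξ, θ⟫:ℝ)) ≠ 1 := fun w hw =>
    S9Aux.exp_I_ne_one (hregw w hw θ hθR)
  have hplane : ∀ w ∈ W0fin, ∀ m : ℤ,
      Complex.exp (Complex.I * (⟪w ξ, lam + (m:ℝ) • θ⟫:ℝ))
        = Complex.exp (Complex.I * (⟪w ξ, lam⟫:ℝ)) *
            Complex.exp (Complex.I * (⟪w ξ, θ⟫:ℝ)) ^ m := by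
    intro w hw m
    rw [← Complex.exp_int_mul, ← Complex.exp_add]
    congr 1
    rw [inner_add_right, real_inner_smul_right]
    push_cast
    ring
  have hφval : ∀ m : ℤ, φ (lam + (m:ℝ) • θ)
      = ∑ w ∈ W0fin, Cfun D τ (w ξ) * (Complex.exp (Complex.I * (⟪w ξ, lam⟫:ℝ)) *
          Complex.exp (Complex.I * (⟪w ξ, θ⟫:ℝ)) ^ m) := by
    intro m
    show (∑ w ∈ W0fin, Cfun D τ (w ξ) *
        Complex.exp (Complex.I * (⟪w ξ, lam + (m:ℝ) • θ⟫:ℝ))) = _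
    exact Finset.sum_congr rfl (fun w hw => by rw [hplane w hw m])
  have hJ : Jop (cz:ℝ) (-θ, (1:ℤ)) φ lam
      = ∑ w ∈ W0fin, Cfun D τ (w ξ) * Complex.exp (Complex.I * (⟪w ξ, lam⟫:ℝ)) *
          (Complex.exp (Complex.I * (⟪w ξ, θ⟫:ℝ)) *
              (1 - Complex.exp (Complex.I * (⟪w ξ, θ⟫:ℝ)) ^ M) /
            (Complex.exp (Complex.I * (⟪w ξ, θ⟫:ℝ)) - 1)) := by
    unfold Jop
    rw [haval, Int.floor_intCast]
    rcases lt_trichotomy (0:ℤ) M with hM | hM | hM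
    · rw [if_pos (by exact_mod_cast hM : (0:ℝ) < (M:ℝ))]
      have hstep : ∀ k ∈ Finset.Icc (1:ℤ) M, φ (lam - k • (-θ, (1:ℤ)).1)
          = ∑ w ∈ W0fin, Cfun D τ (w ξ) * (Complex.exp (Complex.I * (⟪w ξ, lam⟫:ℝ)) *
              Complex.exp (Complex.I * (⟪w ξ, θ⟫:ℝ)) ^ k) := by
        intro k hk
        have h1 : lam - k • (-θ, (1:ℤ)).1 = lam + ((k:ℤ):ℝ) • θ := by
          show lam - k • (-θ) = _
          rw [smul_neg, sub_neg_eq_add, Int.cast_smul_eq_zsmul]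
        rw [h1, hφval k]
      rw [Finset.sum_congr rfl hstep, Finset.sum_comm, ← Finset.sum_neg_distrib]
      apply Finset.sum_congr rfl
      intro w hw
      simp_rw [← mul_assoc]
      rw [← Finset.mul_sum, S9Aux.sum_Icc_zpow _ (hq1 w hw) hM]
      ring
    · rw [if_neg (by rw [← hM]; norm_num), if_pos (by rw [← hM]; norm_num)]
      symm
      apply Finset.sum_eq_zero
      intro w hw
      rw [← hM]
      simp
    · rw [if_neg (by exact_mod_cast not_lt.mpr hM.le : ¬ (0:ℝ) < (M:ℝ)),
          if_neg (by exact_mod_cast (by omega : M ≠ 0) : (M:ℝ) ≠ 0)]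
      have hstep : ∀ k ∈ Finset.Ico (0:ℤ) (-M), φ (lam + k • (-θ, (1:ℤ)).1)
          = ∑ w ∈ W0fin, Cfun D τ (w ξ) * (Complex.exp (Complex.I * (⟪w ξ, lam⟫:ℝ)) *
              Complex.exp (Complex.I * (⟪w ξ, θ⟫:ℝ)) ^ (-k)) := by
        intro k hk
        have h1 : lam + k • (-θ, (1:ℤ)).1 = lam + ((-k:ℤ):ℝ) • θ := by
          show lam + k • (-θ) = _
          rw [smul_neg, Int.cast_smul_eq_zsmul, neg_zsmul]
        rw [h1, hφval (-k)]
      rw [Finset.sum_congr rfl hstep, Finset.sum_comm]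
      apply Finset.sum_congr rfl
      intro w hw
      simp_rw [← mul_assoc]
      rw [← Finset.mul_sum, S9Aux.sum_Ico_zpow _ (Complex.exp_ne_zero _) (hq1 w hw) hM]
  have hsAff : sAff (cz:ℝ) (-θ, (1:ℤ)) lam = lam + (M:ℝ) • θ := by
    show lam - aval (cz:ℝ) (-θ, (1:ℤ)) lam • (-θ) = _
    rw [haval, smul_neg, sub_neg_eq_add]
  have hsplit : ∀ w ∈ W0fin,
      τ θ * (Cfun D τ (w ξ) * (Complex.exp (Complex.I * (⟪w ξ, lam⟫:ℝ)) *
          Complex.exp (Complex.I * (⟪w ξ, θ⟫:ℝ)) ^ M))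
        + (τ θ - (τ θ)⁻¹) * (Cfun D τ (w ξ) * Complex.exp (Complex.I * (⟪w ξ, lam⟫:ℝ)) *
            (Complex.exp (Complex.I * (⟪w ξ, θ⟫:ℝ)) *
                (1 - Complex.exp (Complex.I * (⟪w ξ, θ⟫:ℝ)) ^ M) /
              (Complex.exp (Complex.I * (⟪w ξ, θ⟫:ℝ)) - 1)))
      = Cfun D τ (w ξ) * (((τ θ)⁻¹ * Complex.exp (Complex.I * (⟪w ξ, θ⟫:ℝ)) - τ θ) /
            (Complex.exp (Complex.I * (⟪w ξ, θ⟫:ℝ)) - 1)) *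
          (Complex.exp (Complex.I * (⟪w ξ, θ⟫:ℝ)) ^ (cz:ℤ) *
            Complex.exp (Complex.I * (⟪S9Aux.refl θ (w ξ), lam⟫:ℝ)))
        + Cfun D τ (w ξ) * ((τ θ - (τ θ)⁻¹) * Complex.exp (Complex.I * (⟪w ξ, θ⟫:ℝ)) /
            (Complex.exp (Complex.I * (⟪w ξ, θ⟫:ℝ)) - 1)) *
          Complex.exp (Complex.I * (⟪w ξ, lam⟫:ℝ)) := by
    intro w hw
    have hqM : Complex.exp (Complex.I * (⟪w ξ, θ⟫:ℝ)) ^ M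
        = Complex.exp (Complex.I * (⟪w ξ, θ⟫:ℝ)) ^ (cz:ℤ) *
            Complex.exp (Complex.I * (⟪w ξ, θ⟫:ℝ)) ^ ((-kθ):ℤ) := by
      rw [← zpow_add₀ (Complex.exp_ne_zero _)]
      congr 1
    have hlamref : lam + ((-kθ:ℤ):ℝ) • θ = S9Aux.refl θ lam := by
      show _ = lam - ⟪lam, coroot θ⟫ • θ
      rw [hkθ]
      push_cast
      module
    have hX : Complex.exp (Complex.I * (⟪w ξ, lam⟫:ℝ)) *
          Complex.exp (Complex.I * (⟪w ξ, θ⟫:ℝ)) ^ ((-kθ):ℤ)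
        = Complex.exp (Complex.I * (⟪S9Aux.refl θ (w ξ), lam⟫:ℝ)) := by
      rw [← hplane w hw (-kθ)]
      congr 2
      rw [S9Aux.refl_adj, hlamref]
    have hd : Complex.exp (Complex.I * (⟪w ξ, θ⟫:ℝ)) - 1 ≠ 0 :=
      sub_ne_zero.mpr (hq1 w hw)
    have hk0 : Complex.exp (Complex.I * (⟪w ξ, θ⟫:ℝ)) ^ (kθ:ℤ) ≠ 0 :=
      zpow_ne_zero _ (Complex.exp_ne_zero _)
    have hc0 : Complex.exp (Complex.I * (⟪w ξ, θ⟫:ℝ)) ^ (cz:ℤ) ≠ 0 :=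
      zpow_ne_zero _ (Complex.exp_ne_zero _)
    rw [hqM, ← hX]
    field_simp [hd, hτ0ne, hk0, hc0]
    all_goals ring
  have hinvol : S9Aux.reflPerm θ * S9Aux.reflPerm θ = 1 := by
    apply Equiv.ext
    intro x
    exact S9Aux.refl_refl θ x
  have hreindex : (∑ w ∈ W0fin,
        Cfun D τ (w ξ) * (((τ θ)⁻¹ * Complex.exp (Complex.I * (⟪w ξ, θ⟫:ℝ)) - τ θ) /
            (Complex.exp (Complex.I * (⟪w ξ, θ⟫:ℝ)) - 1)) *
          (Complex.exp (Complex.I * (⟪w ξ, θ⟫:ℝ)) ^ (cz:ℤ) *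
            Complex.exp (Complex.I * (⟪S9Aux.refl θ (w ξ), lam⟫:ℝ))))
      = ∑ w ∈ W0fin,
          Cfun D τ (S9Aux.refl θ (w ξ)) *
            (((τ θ)⁻¹ * (Complex.exp (Complex.I * (⟪w ξ, θ⟫:ℝ)))⁻¹ - τ θ) /
              ((Complex.exp (Complex.I * (⟪w ξ, θ⟫:ℝ)))⁻¹ - 1)) *
            (((Complex.exp (Complex.I * (⟪w ξ, θ⟫:ℝ)))⁻¹) ^ (cz:ℤ) *
              Complex.exp (Complex.I * (⟪w ξ, lam⟫:ℝ))) := by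
    refine Finset.sum_nbij' (fun w => S9Aux.reflPerm θ * w) (fun w => S9Aux.reflPerm θ * w)
      ?_ ?_ ?_ ?_ ?_
    · intro a ha
      exact (hW0fin _).mpr (D.W0.mul_mem (S9Aux.reflPerm_mem D hθR) ((hW0fin a).mp ha))
    · intro a ha
      exact (hW0fin _).mpr (D.W0.mul_mem (S9Aux.reflPerm_mem D hθR) ((hW0fin a).mp ha))
    · intro a ha
      show S9Aux.reflPerm θ * (S9Aux.reflPerm θ * a) = a
      rw [← mul_assoc, hinvol, one_mul]
    · intro a ha
      show S9Aux.reflPerm θ * (S9Aux.reflPerm θ * a) = a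
      rw [← mul_assoc, hinvol, one_mul]
    · intro a ha
      have happ : ∀ x : V, (S9Aux.reflPerm θ * a) x = S9Aux.refl θ (a x) := fun x => rfl
      have hQr : Complex.exp (Complex.I * (⟪S9Aux.refl θ (a ξ), θ⟫:ℝ))
          = (Complex.exp (Complex.I * (⟪a ξ, θ⟫:ℝ)))⁻¹ := by
        rw [S9Aux.refl_adj, S9Aux.refl_self, inner_neg_right]
        exact S9Aux.exp_inv_eq _
      rw [happ ξ, S9Aux.refl_refl, hQr, inv_inv]
  have hfinal : ∀ w ∈ W0fin,
      Cfun D τ (S9Aux.refl θ (w ξ)) *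
          (((τ θ)⁻¹ * (Complex.exp (Complex.I * (⟪w ξ, θ⟫:ℝ)))⁻¹ - τ θ) /
            ((Complex.exp (Complex.I * (⟪w ξ, θ⟫:ℝ)))⁻¹ - 1)) *
          (((Complex.exp (Complex.I * (⟪w ξ, θ⟫:ℝ)))⁻¹) ^ (cz:ℤ) *
            Complex.exp (Complex.I * (⟪w ξ, lam⟫:ℝ)))
        + Cfun D τ (w ξ) * ((τ θ - (τ θ)⁻¹) * Complex.exp (Complex.I * (⟪w ξ, θ⟫:ℝ)) /
            (Complex.exp (Complex.I * (⟪w ξ, θ⟫:ℝ)) - 1)) *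
          Complex.exp (Complex.I * (⟪w ξ, lam⟫:ℝ))
      = τ θ * (Cfun D τ (w ξ) * Complex.exp (Complex.I * (⟪w ξ, lam⟫:ℝ))) := by
    intro w hw
    have hCr := S9Aux.Cratio D τ hτmod tauneg taurefl (w ξ) (hregw w hw)
    have hνmem : w⁻¹ θ ∈ D.rootLattice :=
      Submodule.subset_span (Finset.mem_coe.mpr ((hGood w hw).2.2.2.2 θ hθR))
    have hB' := hBethe (w⁻¹ θ) hνmem
    have hKey := S9Aux.Key D τ hτmod tauneg ξ w (hGood w hw) (tauWinv w hw) cz hB'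
    have hQ0 : Complex.exp (Complex.I * (⟪w ξ, θ⟫:ℝ)) ≠ 0 := Complex.exp_ne_zero _
    have hQ1 := hq1 w hw
    have hd1 : Complex.exp (Complex.I * (⟪w ξ, θ⟫:ℝ)) - 1 ≠ 0 := sub_ne_zero.mpr hQ1
    have hd2 : (Complex.exp (Complex.I * (⟪w ξ, θ⟫:ℝ)))⁻¹ - 1 ≠ 0 :=
      sub_ne_zero.mpr (fun h => hQ1 (by rwa [inv_eq_one] at h))
    have hnum : 1 - (τ θ)^2 * Complex.exp (Complex.I * (⟪w ξ, θ⟫:ℝ)) ≠ 0 :=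
      S9Aux.one_sub_mul_exp_ne (S9Aux.sq_abs_ne_one hτ0mod) _
    have hden : (τ θ)^2 - Complex.exp (Complex.I * (⟪w ξ, θ⟫:ℝ)) ≠ 0 :=
      S9Aux.sub_exp_ne (S9Aux.sq_abs_ne_one hτ0mod) _
    have hFθ : S9Aux.Fz τ (w ξ) θ
        = (1 - (τ θ)^2 * Complex.exp (Complex.I * (⟪w ξ, θ⟫:ℝ))) /
            ((τ θ)^2 - Complex.exp (Complex.I * (⟪w ξ, θ⟫:ℝ))) := rfl
    have hPr : (∏ α ∈ S9Aux.Spos D, S9Aux.Fz τ (w ξ) α)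
        = Complex.exp (Complex.I * (⟪w ξ, θ⟫:ℝ)) ^ (cz:ℤ) *
            ((τ θ)^2 - Complex.exp (Complex.I * (⟪w ξ, θ⟫:ℝ))) /
            (1 - (τ θ)^2 * Complex.exp (Complex.I * (⟪w ξ, θ⟫:ℝ))) := by
      refine S9Aux.alg2 _ _ _ _ hnum hden ?_
      rw [← hFθ]
      exact hKey
    have hQc : Complex.exp (Complex.I * (⟪w ξ, θ⟫:ℝ)) ^ (cz:ℤ) ≠ 0 := zpow_ne_zero _ hQ0
    rw [hCr, hPr, inv_zpow]
    exact S9Aux.heart_alg _ _ _ _ _ hQ0 hQ1 hτ0ne hnum hQc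
  show τ θ * φ (sAff (cz:ℝ) (-θ, (1:ℤ)) lam)
      + (τ θ - (τ θ)⁻¹) * Jop (cz:ℝ) (-θ, (1:ℤ)) φ lam = τ θ * φ lam
  rw [hsAff, hφval M, hJ,
    show φ lam = ∑ w ∈ W0fin, Cfun D τ (w ξ) *
        Complex.exp (Complex.I * (⟪w ξ, lam⟫:ℝ)) from rfl,
    Finset.mul_sum, Finset.mul_sum, Finset.mul_sum, ← Finset.sum_add_distrib,
    Finset.sum_congr rfl hsplit, Finset.sum_add_distrib, hreindex,
    ← Finset.sum_add_distrib, Finset.sum_congr rfl hfinal]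
end
end

section
/- Let μ ∈ P∨ and suppose ξ ∈ V satisfies the critical equation c ξ + ∑_{α∈R₀⁺} v_α(⟨ξ,α⟩) α∨ = 2π(ρ∨ + μ). Then ξ solves the Bethe-type equations: for every ν ∈ Q, e^{ic⟨ξ,ν⟩} = ∏_{α∈R₀⁺} ((1 − t_α e^{i⟨ξ,α⟩})/(t_α − e^{i⟨ξ,α⟩}))^{⟨ν,α∨⟩}. -/
open scoped RealInnerProductSpace BigOperators Classical

noncomputable section

private lemma my_denom_pos {t : ℝ} (ht : t ∈ Set.Ioo (-1:ℝ) 1) (y : ℝ) :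
    0 < 1 - 2 * t * Real.cos y + t ^ 2 := by
  obtain ⟨h1, h2⟩ := ht
  nlinarith [Real.neg_one_le_cos y, Real.cos_le_one y, sq_nonneg (Real.cos y - t),
    mul_pos (by linarith : (0:ℝ) < 1 + t) (by linarith : (0:ℝ) < 1 - t),
    mul_nonneg (by nlinarith [Real.neg_one_le_cos y] : (0:ℝ) ≤ 1 + Real.cos y)
      (by nlinarith [Real.cos_le_one y] : (0:ℝ) ≤ 1 - Real.cos y)]

private lemma my_mvfun_hasDerivAt {t : ℝ} (ht : t ∈ Set.Ioo (-1:ℝ) 1) (x : ℝ) :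
    HasDerivAt (mvfun t) ((1 - t ^ 2) / (1 - 2 * t * Real.cos x + t ^ 2)) x := by
  have hcont : Continuous fun y : ℝ => 1 / (1 - 2 * t * Real.cos y + t ^ 2) :=
    Continuous.div continuous_const (by continuity) fun y => (my_denom_pos ht y).ne'
  have h := ((hcont.integral_hasStrictDerivAt 0 x).hasDerivAt).const_mul (1 - t ^ 2)
  have heq : mvfun t = fun y => (1 - t ^ 2) * ∫ z in (0:ℝ)..y, 1 / (1 - 2 * t * Real.cos z + t ^ 2) := rfl
  rw [heq]
  simpa [one_div, div_eq_mul_inv] using h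

private lemma my_key_ratio {t : ℝ} (ht : t ∈ Set.Ioo (-1:ℝ) 1) (x : ℝ) :
    ((1:ℂ) - (t:ℂ) * Complex.exp (Complex.I * (x:ℝ))) /
        ((t:ℂ) - Complex.exp (Complex.I * (x:ℝ)))
      = Complex.exp (Complex.I * ((Real.pi - mvfun t x : ℝ) : ℂ)) := by
  obtain ⟨ht1, ht2⟩ := ht
  set E : ℝ → ℂ := fun y => Complex.exp (Complex.I * (y:ℂ)) with hEdef
  have habs : ∀ y : ℝ, ‖E y‖ = 1 := by
    intro y
    simp [hEdef, Complex.norm_exp]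
  have hEne : ∀ y : ℝ, (t:ℂ) - E y ≠ 0 := by
    intro y h
    have h' : E y = (t:ℂ) := (sub_eq_zero.mp h).symm
    have h2 := habs y
    rw [h', Complex.norm_real, Real.norm_eq_abs] at h2
    have h3 : |t| < 1 := abs_lt.mpr ⟨ht1, ht2⟩
    linarith
  have hE : ∀ y : ℝ, HasDerivAt E (Complex.I * E y) y := by
    intro y
    have h1 : HasDerivAt (fun y : ℝ => Complex.I * (y:ℂ)) Complex.I y := by
      simpa using ((hasDerivAt_id y).ofReal_comp (z := y)).const_mul Complex.I
    simpa [hEdef, mul_comm] using h1.cexp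
  set g : ℝ → ℂ := fun y => ((t:ℂ) * E y - 1) / ((t:ℂ) - E y) with hgdef
  have hderiv : ∀ y : ℝ,
      HasDerivAt (fun z : ℝ => Complex.exp (Complex.I * (mvfun t z : ℂ)) * g z) 0 y := by
    intro y
    have hv := (my_mvfun_hasDerivAt ⟨ht1, ht2⟩ y).ofReal_comp
    have hexp := (hv.const_mul Complex.I).cexp
    have hnum : HasDerivAt (fun z : ℝ => (t:ℂ) * E z - 1) ((t:ℂ) * (Complex.I * E y)) y :=
      ((hE y).const_mul (t:ℂ)).sub_const 1
    have hden : HasDerivAt (fun z : ℝ => (t:ℂ) - E z) (-(Complex.I * E y)) y :=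
      (hE y).const_sub (t:ℂ)
    have hg := hnum.div hden (hEne y)
    have hEy : E y ≠ 0 := Complex.exp_ne_zero _
    have hd := hEne y
    have hdr : ((1 - 2 * t * Real.cos y + t ^ 2 : ℝ) : ℂ) ≠ 0 := by
      exact_mod_cast (my_denom_pos ⟨ht1, ht2⟩ y).ne'
    have hcos : Complex.cos (y:ℂ) = (E y + (E y)⁻¹) / 2 := by
      rw [hEdef]
      simp only [mul_comm Complex.I]
      rw [← Complex.exp_neg, ← neg_mul, Complex.exp_mul_I, Complex.exp_mul_I]
      rw [Complex.cos_neg, Complex.sin_neg]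
      ring
    have hdrC : (1:ℂ) - 2 * (t:ℂ) * Complex.cos (y:ℂ) + (t:ℂ) ^ 2 ≠ 0 := by
      push_cast at hdr
      exact hdr
    have hrel : E y ^ 2 + 1 = 2 * Complex.cos (y:ℂ) * E y := by
      have h1 := hcos
      field_simp [hEy] at h1
      linear_combination -h1
    have hId : (↑t * (Complex.I * E y) * ((t:ℂ) - E y) - ((t:ℂ) * E y - 1) * -(Complex.I * E y))
          / ((t:ℂ) - E y) ^ 2
        = -(Complex.I * ((1 - (t:ℂ) ^ 2) / (1 - 2 * (t:ℂ) * Complex.cos (y:ℂ) + (t:ℂ) ^ 2)))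
            * (((t:ℂ) * E y - 1) / ((t:ℂ) - E y)) := by
      have hD : (1 - 2 * (t:ℂ) * Complex.cos (y:ℂ) + (t:ℂ) ^ 2) * E y = ((t:ℂ) - E y) * ((t:ℂ) * E y - 1) := by
        linear_combination (t:ℂ) * hrel
      have hq : ((t:ℂ) * E y - 1) / ((t:ℂ) - E y)
          = (1 - 2 * (t:ℂ) * Complex.cos (y:ℂ) + (t:ℂ) ^ 2) * E y / ((t:ℂ) - E y) ^ 2 := by
        rw [div_eq_div_iff hd (pow_ne_zero 2 hd)]
        linear_combination (-((t:ℂ) - E y)) * hD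
      have hinv := mul_inv_cancel₀ hdrC
      rw [hq]
      linear_combination (((t:ℂ) - E y) ^ 2)⁻¹ * Complex.I * (1 - (t:ℂ) ^ 2) * E y * hinv
    have hmul := hexp.mul hg
    refine hmul.congr_deriv ?_
    simp only [Pi.div_apply]
    push_cast
    rw [hId]
    ring
  have hconst := is_const_of_deriv_eq_zero
    (f := fun z : ℝ => Complex.exp (Complex.I * (mvfun t z : ℂ)) * g z)
    (fun z => (hderiv z).differentiableAt) (fun z => (hderiv z).deriv) x 0
  have hv0 : mvfun t 0 = 0 := by simp [mvfun]
  have hE0 : E 0 = 1 := by simp [hEdef]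
  have ht1' : (t:ℂ) - 1 ≠ 0 := by
    intro h'
    have h2 : (t:ℂ) = 1 := by
      have := sub_eq_zero.mp h'
      exact this
    have : t = 1 := by exact_mod_cast h2
    linarith
  have hh0 : Complex.exp (Complex.I * (mvfun t 0 : ℂ)) * g 0 = 1 := by
    simp only [hv0, hgdef, hE0]
    push_cast
    rw [mul_zero, Complex.exp_zero, one_mul, mul_one, div_self ht1']
  have hgx : g x = (Complex.exp (Complex.I * (mvfun t x : ℂ)))⁻¹ :=
    eq_inv_of_mul_eq_one_right (hconst.trans hh0)
  have hratio : ((1:ℂ) - (t:ℂ) * E x) / ((t:ℂ) - E x) = -g x := by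
    rw [hgdef, ← neg_div]
    congr 1
    ring
  rw [hratio, hgx, ← Complex.exp_neg]
  have harg : Complex.I * ((Real.pi - mvfun t x : ℝ) : ℂ)
      = (Real.pi : ℂ) * Complex.I + -(Complex.I * (mvfun t x : ℂ)) := by
    push_cast
    ring
  rw [harg, Complex.exp_add, Complex.exp_pi_mul_I]
  ring

private lemma my_rootLattice_int {V : Type*} [NormedAddCommGroup V] [InnerProductSpace ℝ V]
    (D : RootSystemData V) {w : V} (hw : ∀ β ∈ D.R0, ∃ k : ℤ, ⟪β, w⟫ = (k:ℝ))
    {ν : V} (hν : ν ∈ D.rootLattice) : ∃ k : ℤ, ⟪ν, w⟫ = (k:ℝ) := by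
  have hν' : ν ∈ Submodule.span ℤ (D.R0 : Set V) := hν
  clear hν
  induction hν' using Submodule.span_induction with
  | mem x hx => exact hw x hx
  | zero => exact ⟨0, by simp⟩
  | add x y hx hy ihx ihy =>
      obtain ⟨k1, h1⟩ := ihx
      obtain ⟨k2, h2⟩ := ihy
      exact ⟨k1 + k2, by rw [inner_add_left, h1, h2]; push_cast; ring⟩
  | smul a x hx ih =>
      obtain ⟨k, h⟩ := ih
      refine ⟨a * k, ?_⟩
      rw [← Int.cast_smul_eq_zsmul ℝ a x, real_inner_smul_left, h]
      push_cast
      ring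

open RootSystemData in
/-- any solution `ξ` of the critical equation
`cξ + ∑_{α>0} v_α(⟨ξ,α⟩) α∨ = 2π(ρ∨+μ)` (with `μ ∈ P∨`) solves the Bethe-type
equations. -/
theorem statement11 {V : Type*} [NormedAddCommGroup V] [InnerProductSpace ℝ V]
    (D : RootSystemData V) (c : ℝ) (hc : 0 < c)
    (t : V → ℝ) (ht : ∀ α ∈ D.R0, t α ∈ Set.Ioo (-1 : ℝ) 1)
    (htinv : ∀ α ∈ D.R0, ∀ β ∈ D.R0, (∃ w ∈ D.W0, w α = β) → t α = t β)
    (μ : V) (hμ : μ ∈ D.coweightLattice)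
    (ξ : V) (hcrit : D.criticalEq c t μ ξ) :
    ∀ ν ∈ D.rootLattice,
      Complex.exp (Complex.I * (c * ⟪ξ, ν⟫ : ℝ))
        = ∏ α ∈ D.pos,
            ((1 - (t α : ℂ) * Complex.exp (Complex.I * (⟪ξ, α⟫ : ℝ))) /
              ((t α : ℂ) - Complex.exp (Complex.I * (⟪ξ, α⟫ : ℝ))))
            ^ ⌊⟪ν, coroot α⟫⌋ := by
  intro ν hν
  have hkey : ∀ α ∈ D.pos, ∃ k : ℤ, ⟪ν, coroot α⟫ = (k:ℝ) := fun α hα =>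
    my_rootLattice_int D (fun β hβ => D.crystallographic α (D.pos_subset hα) β hβ) hν
  obtain ⟨m, hm⟩ : ∃ m : ℤ, ⟪ν, μ⟫ = (m:ℝ) := by
    refine my_rootLattice_int D (fun β hβ => ?_) hν
    obtain ⟨k, hk⟩ := hμ β hβ
    exact ⟨k, by rw [real_inner_comm]; exact hk⟩
  rw [real_inner_comm μ ν] at hm
  set k : V → ℤ := fun α => if h : α ∈ D.pos then (hkey α h).choose else 0 with hkdef
  have hk : ∀ α ∈ D.pos, ⟪ν, coroot α⟫ = (k α : ℝ) := by
    intro α hα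
    simp only [hkdef, dif_pos hα]
    exact (hkey α hα).choose_spec
  have hcrit' : c • ξ + ∑ α ∈ D.pos, mvfun (t α) ⟪ξ, α⟫ • coroot α
      = (2 * Real.pi) • (D.rhoVee + μ) := hcrit
  have hE := congrArg (fun w : V => ⟪w, ν⟫) hcrit'
  simp only [RootSystemData.rhoVee, inner_add_left, sum_inner, real_inner_smul_left] at hE
  have e1 : ∑ α ∈ D.pos, mvfun (t α) ⟪ξ, α⟫ * ⟪coroot α, ν⟫
      = ∑ α ∈ D.pos, mvfun (t α) ⟪ξ, α⟫ * (k α : ℝ) :=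
    Finset.sum_congr rfl fun α hα => by rw [real_inner_comm ν (coroot α), hk α hα]
  have e2 : ∑ α ∈ D.pos, ⟪coroot α, ν⟫ = ∑ α ∈ D.pos, (k α : ℝ) :=
    Finset.sum_congr rfl fun α hα => by rw [real_inner_comm ν (coroot α), hk α hα]
  rw [e1, e2, hm] at hE
  have e3 : ∑ α ∈ D.pos, (k α : ℝ) * (Real.pi - mvfun (t α) ⟪ξ, α⟫)
      = Real.pi * (∑ α ∈ D.pos, (k α : ℝ)) - ∑ α ∈ D.pos, mvfun (t α) ⟪ξ, α⟫ * (k α : ℝ) := by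
    rw [Finset.mul_sum, ← Finset.sum_sub_distrib]
    exact Finset.sum_congr rfl fun α _ => by ring
  have hreal : c * ⟪ξ, ν⟫
      = (∑ α ∈ D.pos, (k α : ℝ) * (Real.pi - mvfun (t α) ⟪ξ, α⟫)) + 2 * Real.pi * m := by
    rw [e3]
    linear_combination hE
  calc Complex.exp (Complex.I * (c * ⟪ξ, ν⟫ : ℝ))
      = Complex.exp ((∑ α ∈ D.pos, (k α : ℂ) *
          (Complex.I * ((Real.pi - mvfun (t α) ⟪ξ, α⟫ : ℝ) : ℂ))) +
          (m : ℂ) * (2 * (Real.pi : ℂ) * Complex.I)) := by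
        congr 1
        rw [hreal]
        push_cast
        rw [mul_add, Finset.mul_sum]
        congr 1
        · exact Finset.sum_congr rfl fun α _ => by ring
        · ring
    _ = ∏ α ∈ D.pos,
          ((1 - (t α : ℂ) * Complex.exp (Complex.I * (⟪ξ, α⟫ : ℝ))) /
            ((t α : ℂ) - Complex.exp (Complex.I * (⟪ξ, α⟫ : ℝ))))
          ^ ⌊⟪ν, coroot α⟫⌋ := by
        rw [Complex.exp_add, Complex.exp_int_mul_two_pi_mul_I, mul_one, Complex.exp_sum]
        refine Finset.prod_congr rfl fun α hα => ?_
        rw [Complex.exp_int_mul, hk α hα, Int.floor_intCast,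
          my_key_ratio (ht α (D.pos_subset hα)) ⟪ξ, α⟫]
end
end
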